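/- arXiv:1008.4014 — 6 statements merged into one kernel-verified Lean document; each statement's English description precedes it below -/
import Mathlib

section
/- The function x ↦ |1 − e^{2πix}|^{−1} is μ-integrable on [0,1], and for every N ≥ 1 one has |Σ_{n=1}^{N} d_n| ≤ ∫₀¹ 2·|1 − e^{2πix}|^{−1} dμ(x); in particular the partial sums Σ_{n=1}^{N} d_n are uniformly bounded in N. -/
open MeasureTheory Real Set Filter Asymptotics

lemma aux_norm (x : ℝ) : ‖1 - Complex.exp ((x:ℂ) * Complex.I)‖ = 2 * |Real.sin (x/2)| := by
  have h1 : ((1 : ℂ) - Complex.exp ((x:ℂ) * Complex.I)).re = 1 - Real.cos x := by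
    simp [Complex.exp_ofReal_mul_I_re]
  have h2 : ((1 : ℂ) - Complex.exp ((x:ℂ) * Complex.I)).im = - Real.sin x := by
    simp [Complex.exp_ofReal_mul_I_im]
  rw [Complex.norm_def, Complex.normSq_apply, h1, h2,
    Real.abs_sin_half]
  rw [show (1 - Real.cos x) * (1 - Real.cos x) + -Real.sin x * -Real.sin x
      = 4 * ((1 - Real.cos x)/2) by nlinarith [Real.sin_sq_add_cos_sq x]]
  rw [show (4 : ℝ) * ((1 - Real.cos x)/2) = 2^2 * ((1 - Real.cos x)/2) by ring,
    Real.sqrt_mul (by positivity), Real.sqrt_sq (by norm_num)]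

lemma aux_norm' {x : ℝ} (h0 : 0 ≤ x) (h1 : x ≤ 1) :
    ‖1 - Complex.exp (((2 * π * x : ℝ) : ℂ) * Complex.I)‖ = 2 * Real.sin (π * x) := by
  rw [aux_norm]
  congr 1
  rw [show 2 * π * x / 2 = π * x by ring, abs_of_nonneg]
  exact Real.sin_nonneg_of_nonneg_of_le_pi (by positivity)
    (by nlinarith [Real.pi_pos])

lemma aux_sin_lb {x : ℝ} (h0 : 0 ≤ x) (h1 : x ≤ 1/2) : 2 * x ≤ Real.sin (π * x) := by
  have := Real.mul_le_sin (x := π * x) (by positivity)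
    (by nlinarith [Real.pi_pos])
  have hπ := Real.pi_pos
  calc 2 * x = 2 / π * (π * x) := by field_simp
    _ ≤ Real.sin (π * x) := this

lemma aux_exp_ne_one {x : ℝ} (h0 : 0 < x) (h1 : x < 1) :
    Complex.exp (((2 * π * x : ℝ) : ℂ) * Complex.I) ≠ 1 := by
  intro h
  rw [Complex.exp_eq_one_iff] at h
  obtain ⟨n, hn⟩ := h
  have h2 : ((x:ℂ) - n) * (2 * (π:ℂ) * Complex.I) = 0 := by
    push_cast at hn ⊢; linear_combination hn
  have h3 : (2 * (π:ℂ) * Complex.I) ≠ 0 := by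
    simp [Complex.I_ne_zero, Complex.ofReal_ne_zero.2 Real.pi_ne_zero]
  have h4 : (x:ℝ) = (n:ℝ) := by
    have h5 := (mul_eq_zero.1 h2).resolve_right h3
    have h6 : (x:ℂ) = (n:ℂ) := by linear_combination h5
    exact_mod_cast h6
  have h7 : (0:ℝ) < (n:ℝ) := h4 ▸ h0
  have h8 : (n:ℝ) < 1 := h4 ▸ h1
  have : (0:ℤ) < n := by exact_mod_cast h7
  have : n < 1 := by exact_mod_cast h8
  omega

lemma aux_sum_bound {x : ℝ} (h0 : 0 < x) (h1 : x < 1) (N : ℕ) :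
    |∑ n ∈ Finset.Icc 1 N, Real.cos (2 * π * n * x)| ≤
      2 * ‖1 - Complex.exp (((2 * π * x : ℝ) : ℂ) * Complex.I)‖⁻¹ := by
  set z : ℂ := Complex.exp (((2 * π * x : ℝ) : ℂ) * Complex.I) with hz
  have hzne : z ≠ 1 := aux_exp_ne_one h0 h1
  have hznorm : ‖z‖ = 1 := by
    rw [hz, Complex.norm_exp_ofReal_mul_I]
  have hpow : ∀ n : ℕ, z ^ n = Complex.exp (((2 * π * n * x : ℝ) : ℂ) * Complex.I) := by
    intro n
    rw [hz, ← Complex.exp_nat_mul]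
    congr 1
    push_cast
    ring
  have hre : ∀ n : ℕ, Real.cos (2 * π * n * x) = (z ^ n).re := by
    intro n
    rw [hpow n, Complex.exp_ofReal_mul_I_re]
  have hsum : ∑ n ∈ Finset.Icc 1 N, Real.cos (2 * π * n * x)
      = (∑ n ∈ Finset.Icc 1 N, z ^ n).re := by
    rw [Complex.re_sum]
    exact Finset.sum_congr rfl fun n _ => hre n
  have hgeom : ∑ n ∈ Finset.Icc 1 N, z ^ n = z * ((z ^ N - 1) / (z - 1)) := by
    have : Finset.Icc 1 N = Finset.Ico 1 (N + 1) := by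
      rw [Finset.Ico_add_one_right_eq_Icc]
    rw [this, Finset.sum_Ico_eq_sum_range]
    simp only [Nat.add_sub_cancel]
    simp only [pow_add, pow_one]
    rw [← Finset.mul_sum, geom_sum_eq hzne]
  have hnorm_le : ‖∑ n ∈ Finset.Icc 1 N, z ^ n‖ ≤ 2 * ‖1 - z‖⁻¹ := by
    rw [hgeom, norm_mul, hznorm, one_mul, norm_div]
    have h2 : ‖z ^ N - 1‖ ≤ 2 := by
      calc ‖z ^ N - 1‖ ≤ ‖z ^ N‖ + ‖(1:ℂ)‖ := norm_sub_le _ _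
        _ = 2 := by rw [norm_pow, hznorm]; norm_num
    have h3 : ‖z - 1‖ = ‖1 - z‖ := by rw [← norm_neg]; ring_nf
    rw [h3, div_eq_mul_inv]
    have h4 : (0:ℝ) < ‖1 - z‖ := by
      rw [norm_pos_iff, sub_ne_zero]; exact fun h => hzne h.symm
    exact mul_le_mul_of_nonneg_right h2 (by positivity)
  calc |∑ n ∈ Finset.Icc 1 N, Real.cos (2 * π * n * x)|
      = |(∑ n ∈ Finset.Icc 1 N, z ^ n).re| := by rw [hsum]
    _ ≤ ‖∑ n ∈ Finset.Icc 1 N, z ^ n‖ := Complex.abs_re_le_norm _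
    _ ≤ 2 * ‖1 - z‖⁻¹ := hnorm_le

lemma aux_fA {n : ℕ} {x : ℝ} (hx : x ∈ Ioc (1/((n:ℝ)+3)) (1/((n:ℝ)+2))) :
    ‖1 - Complex.exp (((2 * π * x : ℝ) : ℂ) * Complex.I)‖⁻¹ ≤ ((n:ℝ)+3)/4 := by
  obtain ⟨h1, h2⟩ := hx
  have hx0 : (0:ℝ) < x := lt_trans (by positivity) h1
  have hx2 : x ≤ 1/2 := le_trans h2 (one_div_le_one_div_of_le (by norm_num) (by push_cast; linarith))
  rw [aux_norm' hx0.le (by linarith)]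
  have hs := aux_sin_lb hx0.le hx2
  have h4 : 4/((n:ℝ)+3) ≤ 2 * Real.sin (π*x) := by
    have e : 4/((n:ℝ)+3) = 4*(1/((n:ℝ)+3)) := by ring
    linarith
  calc (2*Real.sin (π*x))⁻¹ ≤ (4/((n:ℝ)+3))⁻¹ := by
        apply inv_anti₀ (by positivity) h4
    _ = ((n:ℝ)+3)/4 := by rw [inv_div]

lemma aux_fB {n : ℕ} {x : ℝ} (hx : x ∈ Ioc (1 - 1/((n:ℝ)+2)) (1 - 1/((n:ℝ)+3))) :
    ‖1 - Complex.exp (((2 * π * x : ℝ) : ℂ) * Complex.I)‖⁻¹ ≤ ((n:ℝ)+3)/4 := by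
  obtain ⟨h1, h2⟩ := hx
  have hd2 : 1/((n:ℝ)+2) ≤ 1/2 := one_div_le_one_div_of_le (by norm_num) (by push_cast; linarith)
  have hd3 : (0:ℝ) < 1/((n:ℝ)+3) := by positivity
  have hx0 : (0:ℝ) < x := by linarith
  have hx1 : x ≤ 1 := by linarith
  rw [aux_norm' hx0.le hx1]
  have hsin : Real.sin (π*x) = Real.sin (π*(1-x)) := by
    rw [show π*(1-x) = π - π*x by ring, Real.sin_pi_sub]
  have ht1 : 1/((n:ℝ)+3) ≤ 1-x := by linarith
  have ht2 : 1-x ≤ 1/2 := by linarith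
  have hs := aux_sin_lb (by linarith : (0:ℝ) ≤ 1-x) ht2
  have h4 : 4/((n:ℝ)+3) ≤ 2 * Real.sin (π*x) := by
    rw [hsin]
    have e : 4/((n:ℝ)+3) = 4*(1/((n:ℝ)+3)) := by ring
    linarith
  calc (2*Real.sin (π*x))⁻¹ ≤ (4/((n:ℝ)+3))⁻¹ := by
        apply inv_anti₀ (by positivity) h4
    _ = ((n:ℝ)+3)/4 := by rw [inv_div]

lemma aux_key (Q : ℝ → ℝ) (μ : Measure ℝ) [IsProbabilityMeasure μ]
    (hμ : ∀ a b : ℝ, 0 ≤ a → a ≤ b → b ≤ 1 →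
      μ (Ioc a b) = ENNReal.ofReal (Q b - Q a))
    (hQinv : ∀ n : ℕ, Q (1/((n:ℝ)+1)) = (1/2:ℝ)^n)
    (hQinv' : ∀ n : ℕ, Q (1 - 1/((n:ℝ)+1)) = 1 - (1/2:ℝ)^n)
    (hres2 : μ.restrict (Ioo (0:ℝ) 1) = μ) :
    ∫⁻ x, ENNReal.ofReal ‖1 - Complex.exp (((2 * π * x : ℝ) : ℂ) * Complex.I)‖⁻¹ ∂μ < ⊤ := by
  set F : ℝ → ENNReal :=
    fun x => ENNReal.ofReal ‖1 - Complex.exp (((2 * π * x : ℝ) : ℂ) * Complex.I)‖⁻¹ with hF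
  set A : ℕ → Set ℝ := fun n => Ioc (1/((n:ℝ)+3)) (1/((n:ℝ)+2)) with hA
  set B : ℕ → Set ℝ := fun n => Ioc (1 - 1/((n:ℝ)+2)) (1 - 1/((n:ℝ)+3)) with hB
  -- basic inequalities on endpoints
  have hend : ∀ n : ℕ, (0:ℝ) ≤ 1/((n:ℝ)+3) ∧ 1/((n:ℝ)+3) ≤ 1/((n:ℝ)+2) ∧ 1/((n:ℝ)+2) ≤ 1 := by
    intro n
    refine ⟨by positivity, ?_, ?_⟩
    · exact one_div_le_one_div_of_le (by positivity) (by linarith)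
    · rw [div_le_one (by positivity)]; linarith [(Nat.cast_nonneg n : (0:ℝ) ≤ (n:ℝ))]
  -- Q values at 1/(n+2), 1/(n+3)
  have hQ2 : ∀ n : ℕ, Q (1/((n:ℝ)+2)) = (1/2:ℝ)^(n+1) := by
    intro n
    have := hQinv (n+1)
    push_cast at this
    rw [show ((n:ℝ)+1)+1 = (n:ℝ)+2 by ring] at this
    exact this
  have hQ3 : ∀ n : ℕ, Q (1/((n:ℝ)+3)) = (1/2:ℝ)^(n+2) := by
    intro n
    have := hQinv (n+2)
    push_cast at this
    rw [show ((n:ℝ)+2)+1 = (n:ℝ)+3 by ring] at this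
    exact this
  have hQ2' : ∀ n : ℕ, Q (1 - 1/((n:ℝ)+2)) = 1 - (1/2:ℝ)^(n+1) := by
    intro n
    have := hQinv' (n+1)
    push_cast at this
    rw [show ((n:ℝ)+1)+1 = (n:ℝ)+2 by ring] at this
    exact this
  have hQ3' : ∀ n : ℕ, Q (1 - 1/((n:ℝ)+3)) = 1 - (1/2:ℝ)^(n+2) := by
    intro n
    have := hQinv' (n+2)
    push_cast at this
    rw [show ((n:ℝ)+2)+1 = (n:ℝ)+3 by ring] at this
    exact this
  -- measures of pieces
  have hmA : ∀ n : ℕ, μ (A n) ≤ ENNReal.ofReal ((1/2:ℝ)^(n+1)) := by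
    intro n
    obtain ⟨e1, e2, e3⟩ := hend n
    rw [hA]
    rw [hμ _ _ e1 e2 e3, hQ2, hQ3]
    apply ENNReal.ofReal_le_ofReal
    have : (0:ℝ) < (1/2:ℝ)^(n+2) := by positivity
    linarith
  have hmB : ∀ n : ℕ, μ (B n) ≤ ENNReal.ofReal ((1/2:ℝ)^(n+1)) := by
    intro n
    obtain ⟨e1, e2, e3⟩ := hend n
    rw [hB]
    rw [hμ _ _ (by linarith) (by linarith) (by linarith), hQ2', hQ3']
    apply ENNReal.ofReal_le_ofReal
    have : (0:ℝ) < (1/2:ℝ)^(n+2) := by positivity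
    linarith
  -- per-piece lintegral bounds
  have hc : ∀ n : ℕ, (0:ℝ) ≤ ((n:ℝ)+3) * (1/2:ℝ)^n := by intro n; positivity
  have hpieceA : ∀ n : ℕ, ∫⁻ x in A n, F x ∂μ ≤ ENNReal.ofReal (((n:ℝ)+3) * (1/2:ℝ)^n) := by
    intro n
    calc ∫⁻ x in A n, F x ∂μ
        ≤ ∫⁻ _ in A n, ENNReal.ofReal (((n:ℝ)+3)/4) ∂μ := by
          apply setLIntegral_mono' measurableSet_Ioc
          intro x hx
          exact ENNReal.ofReal_le_ofReal (aux_fA hx)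
      _ = ENNReal.ofReal (((n:ℝ)+3)/4) * μ (A n) := setLIntegral_const _ _
      _ ≤ ENNReal.ofReal (((n:ℝ)+3)/4) * ENNReal.ofReal ((1/2:ℝ)^(n+1)) :=
          mul_le_mul_right (hmA n) _
      _ ≤ ENNReal.ofReal (((n:ℝ)+3) * (1/2:ℝ)^n) := by
          rw [← ENNReal.ofReal_mul (by positivity)]
          apply ENNReal.ofReal_le_ofReal
          have h1 : (0:ℝ) < (1/2:ℝ)^n := by positivity
          have h2 : ((1/2:ℝ))^(n+1) = (1/2:ℝ)^n / 2 := by ring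
          rw [h2]
          have h3 : (0:ℝ) ≤ (n:ℝ)+3 := by positivity
          nlinarith
  have hpieceB : ∀ n : ℕ, ∫⁻ x in B n, F x ∂μ ≤ ENNReal.ofReal (((n:ℝ)+3) * (1/2:ℝ)^n) := by
    intro n
    calc ∫⁻ x in B n, F x ∂μ
        ≤ ∫⁻ _ in B n, ENNReal.ofReal (((n:ℝ)+3)/4) ∂μ := by
          apply setLIntegral_mono' measurableSet_Ioc
          intro x hx
          exact ENNReal.ofReal_le_ofReal (aux_fB hx)
      _ = ENNReal.ofReal (((n:ℝ)+3)/4) * μ (B n) := setLIntegral_const _ _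
      _ ≤ ENNReal.ofReal (((n:ℝ)+3)/4) * ENNReal.ofReal ((1/2:ℝ)^(n+1)) :=
          mul_le_mul_right (hmB n) _
      _ ≤ ENNReal.ofReal (((n:ℝ)+3) * (1/2:ℝ)^n) := by
          rw [← ENNReal.ofReal_mul (by positivity)]
          apply ENNReal.ofReal_le_ofReal
          have h1 : (0:ℝ) < (1/2:ℝ)^n := by positivity
          have h2 : ((1/2:ℝ))^(n+1) = (1/2:ℝ)^n / 2 := by ring
          rw [h2]
          have h3 : (0:ℝ) ≤ (n:ℝ)+3 := by positivity
          nlinarith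
  -- cover
  have hcover : Ioo (0:ℝ) 1 ⊆ (⋃ n, A n) ∪ (⋃ n, B n) := by
    rintro y ⟨hy0, hy1⟩
    by_cases hhalf : y ≤ 1/2
    · left
      rw [mem_iUnion]
      have hex : ∃ n : ℕ, 1/((n:ℝ)+3) < y := by
        obtain ⟨n, hn⟩ := exists_nat_gt (1/y)
        refine ⟨n, ?_⟩
        rw [div_lt_iff₀ (by positivity)]
        rw [div_lt_iff₀ hy0] at hn
        nlinarith
      refine ⟨Nat.find hex, Nat.find_spec hex, ?_⟩
      rcases Nat.eq_zero_or_pos (Nat.find hex) with h | h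
      · rw [h]; norm_num; linarith
      · have hmin := Nat.find_min hex (Nat.sub_lt h one_pos)
        rw [not_lt] at hmin
        have hk : ((Nat.find hex - 1 : ℕ):ℝ) + 3 = (Nat.find hex : ℝ) + 2 := by
          have h1 : (1:ℕ) ≤ Nat.find hex := h
          push_cast [Nat.cast_sub h1]
          ring
        rw [hk] at hmin
        exact hmin
    · right
      rw [mem_iUnion]
      push_neg at hhalf
      have ht0 : 0 < 1 - y := by linarith
      have hex : ∃ n : ℕ, 1/((n:ℝ)+3) ≤ 1 - y := by
        obtain ⟨n, hn⟩ := exists_nat_gt (1/(1-y))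
        refine ⟨n, le_of_lt ?_⟩
        rw [div_lt_iff₀ (by positivity)]
        rw [div_lt_iff₀ ht0] at hn
        nlinarith
      refine ⟨Nat.find hex, ?_, ?_⟩
      · have h7 : 1 - y < 1/((Nat.find hex:ℝ)+2) := by
          rcases Nat.eq_zero_or_pos (Nat.find hex) with h | h
          · rw [h]; norm_num; linarith
          · have hmin := Nat.find_min hex (Nat.sub_lt h one_pos)
            rw [not_le] at hmin
            have hk : ((Nat.find hex - 1 : ℕ):ℝ) + 3 = (Nat.find hex : ℝ) + 2 := by
              have h1 : (1:ℕ) ≤ Nat.find hex := h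
              push_cast [Nat.cast_sub h1]
              ring
            rw [hk] at hmin
            exact hmin
        linarith
      · linarith [Nat.find_spec hex]
  -- summability
  have hsummable : Summable (fun n : ℕ => ((n:ℝ)+3) * (1/2:ℝ)^n) := by
    have h1 := summable_pow_mul_geometric_of_norm_lt_one (R := ℝ) 1
      (r := (1/2:ℝ)) (by rw [Real.norm_eq_abs]; rw [abs_of_nonneg] <;> norm_num)
    have h2 : Summable (fun n : ℕ => (3:ℝ) * (1/2:ℝ)^n) :=
      (summable_geometric_of_lt_one (by norm_num) (by norm_num)).mul_left 3
    have h3 := h1.add h2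
    apply h3.congr
    intro n
    push_cast
    ring
  have htsum : (∑' n : ℕ, ENNReal.ofReal (((n:ℝ)+3) * (1/2:ℝ)^n)) < ⊤ := by
    rw [← ENNReal.ofReal_tsum_of_nonneg hc hsummable]
    exact ENNReal.ofReal_lt_top
  -- assembly
  calc ∫⁻ x, F x ∂μ = ∫⁻ x in Ioo (0:ℝ) 1, F x ∂μ := by rw [hres2]
    _ ≤ ∫⁻ x in (⋃ n, A n) ∪ (⋃ n, B n), F x ∂μ := lintegral_mono_set hcover
    _ ≤ (∫⁻ x in ⋃ n, A n, F x ∂μ) + ∫⁻ x in ⋃ n, B n, F x ∂μ := lintegral_union_le _ _ _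
    _ ≤ (∑' n : ℕ, ∫⁻ x in A n, F x ∂μ) + ∑' n : ℕ, ∫⁻ x in B n, F x ∂μ :=
        add_le_add (lintegral_iUnion_le _ _) (lintegral_iUnion_le _ _)
    _ ≤ (∑' n : ℕ, ENNReal.ofReal (((n:ℝ)+3) * (1/2:ℝ)^n))
        + ∑' n : ℕ, ENNReal.ofReal (((n:ℝ)+3) * (1/2:ℝ)^n) :=
        add_le_add (ENNReal.tsum_le_tsum hpieceA) (ENNReal.tsum_le_tsum hpieceB)
    _ < ⊤ := ENNReal.add_lt_top.2 ⟨htsum, htsum⟩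


theorem stmt_1
    (Q : ℝ → ℝ) (μ : Measure ℝ) [IsProbabilityMeasure μ]
    (hQcont : ContinuousOn Q (Icc 0 1))
    (hQmono : StrictMonoOn Q (Icc 0 1))
    (hQ0 : Q 0 = 0) (hQ1 : Q 1 = 1)
    (hQsymm : ∀ x ∈ Icc (0:ℝ) 1, Q x = 1 - Q (1 - x))
    (hQfun : ∀ x ∈ Icc (0:ℝ) 1, Q x = 2 * Q (x / (x + 1)))
    (hμ : ∀ a b : ℝ, 0 ≤ a → a ≤ b → b ≤ 1 →
      μ (Ioc a b) = ENNReal.ofReal (Q b - Q a))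
    (hμsupp : μ (Icc (0:ℝ) 1)ᶜ = 0)
    (d : ℕ → ℝ)
    (hd : ∀ n : ℕ, d n = ∫ x in Icc (0:ℝ) 1, Real.cos (2 * π * n * x) ∂μ)
:
    IntegrableOn (fun x : ℝ => ‖1 - Complex.exp (((2 * π * x : ℝ) : ℂ) * Complex.I)‖⁻¹)
      (Icc 0 1) μ ∧
    ∀ N : ℕ, 1 ≤ N →
      |∑ n ∈ Finset.Icc 1 N, d n| ≤
        ∫ x in Icc (0:ℝ) 1, 2 * ‖1 - Complex.exp (((2 * π * x : ℝ) : ℂ) * Complex.I)‖⁻¹ ∂μ := by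
  -- notation
  set f : ℝ → ℝ := fun x : ℝ => ‖1 - Complex.exp (((2 * π * x : ℝ) : ℂ) * Complex.I)‖⁻¹ with hf
  have hf_nonneg : ∀ x, 0 ≤ f x := fun x => by positivity
  have hf_meas : Measurable f := by
    apply Measurable.inv
    apply Measurable.norm
    fun_prop
  -- restrict μ to Icc is μ
  have hres : μ.restrict (Icc (0:ℝ) 1) = μ :=
    Measure.restrict_eq_self_of_ae_mem (by
      rw [MeasureTheory.ae_iff]
      rw [show {x : ℝ | ¬ x ∈ Icc (0:ℝ) 1} = (Icc (0:ℝ) 1)ᶜ from rfl]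
      exact hμsupp)
  -- Q at 1/(n+1)
  have hQinv : ∀ n : ℕ, Q (1/((n:ℝ)+1)) = (1/2:ℝ)^n := by
    intro n
    induction n with
    | zero => simpa using hQ1
    | succ m ih =>
      have hmem : (1/((m:ℝ)+1)) ∈ Icc (0:ℝ) 1 := by
        constructor
        · positivity
        · rw [div_le_one (by positivity)]; push_cast; linarith
      have := hQfun _ hmem
      have harg : (1/((m:ℝ)+1)) / ((1/((m:ℝ)+1)) + 1) = 1/((m:ℝ)+2) := by
        have : ((m:ℝ)+1) ≠ 0 := by positivity
        field_simp
        ring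
      rw [harg, ih] at this
      have : Q (1/((m:ℝ)+2)) = (1/2:ℝ)^m / 2 := by linarith
      rw [show ((m:ℕ)+1 : ℕ) = m + 1 from rfl]
      push_cast
      rw [show (m:ℝ) + 1 + 1 = (m:ℝ) + 2 by ring, this]
      ring
  have hQinv' : ∀ n : ℕ, Q (1 - 1/((n:ℝ)+1)) = 1 - (1/2:ℝ)^n := by
    intro n
    have hmem : (1 - 1/((n:ℝ)+1)) ∈ Icc (0:ℝ) 1 := by
      constructor
      · have : 1/((n:ℝ)+1) ≤ 1 := by
          rw [div_le_one (by positivity)]; linarith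
        linarith
      · have : (0:ℝ) < 1/((n:ℝ)+1) := by positivity
        linarith
    rw [hQsymm _ hmem]
    rw [show (1:ℝ) - (1 - 1/((n:ℝ)+1)) = 1/((n:ℝ)+1) by ring, hQinv]
  -- endpoint null sets
  have hIcc_meas : μ (Icc (0:ℝ) 1) = 1 := by
    refine le_antisymm prob_le_one ?_
    have := hμ 0 1 le_rfl zero_le_one le_rfl
    rw [hQ1, hQ0] at this
    calc (1:ENNReal) = μ (Ioc 0 1) := by rw [this]; norm_num
      _ ≤ μ (Icc 0 1) := measure_mono Ioc_subset_Icc_self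
  have h0null : μ {(0:ℝ)} = 0 := by
    have hsub : Ioc (0:ℝ) 1 ⊆ Icc 0 1 := Ioc_subset_Icc_self
    have hdiff : Icc (0:ℝ) 1 \ Ioc 0 1 = {0} := by
      ext y; simp only [mem_diff, mem_Icc, mem_Ioc, mem_singleton_iff]
      constructor
      · rintro ⟨⟨h1, h2⟩, h3⟩
        by_contra h
        exact h3 ⟨lt_of_le_of_ne h1 (Ne.symm h), h2⟩
      · rintro rfl; norm_num
    have hIoc : μ (Ioc (0:ℝ) 1) = 1 := by
      rw [hμ 0 1 le_rfl zero_le_one le_rfl, hQ1, hQ0]; norm_num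
    have := measure_diff hsub measurableSet_Ioc.nullMeasurableSet
      (by rw [hIoc]; exact ENNReal.one_ne_top)
    rw [hdiff, hIcc_meas, hIoc] at this
    simpa using this
  have h1null : μ {(1:ℝ)} = 0 := by
    have hb : ∀ n : ℕ, μ {(1:ℝ)} ≤ ENNReal.ofReal ((1/2:ℝ)^n) := by
      intro n
      have hsub : {(1:ℝ)} ⊆ Ioc (1 - 1/((n:ℝ)+1)) 1 := by
        intro y hy
        rw [mem_singleton_iff] at hy
        subst hy
        constructor
        · have : (0:ℝ) < 1/((n:ℝ)+1) := by positivity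
          linarith
        · exact le_rfl
      calc μ {(1:ℝ)} ≤ μ (Ioc (1 - 1/((n:ℝ)+1)) 1) := measure_mono hsub
        _ = ENNReal.ofReal (Q 1 - Q (1 - 1/((n:ℝ)+1))) := by
            apply hμ
            · have : 1/((n:ℝ)+1) ≤ 1 := by
                rw [div_le_one (by positivity)]; linarith
              linarith
            · have : (0:ℝ) < 1/((n:ℝ)+1) := by positivity
              linarith
            · exact le_rfl
        _ = ENNReal.ofReal ((1/2:ℝ)^n) := by rw [hQ1, hQinv' n]; norm_num
    have htend : Tendsto (fun n : ℕ => ENNReal.ofReal ((1/2:ℝ)^n)) atTop (nhds 0) := by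
      rw [show (0:ENNReal) = ENNReal.ofReal 0 by simp]
      apply ENNReal.tendsto_ofReal
      exact tendsto_pow_atTop_nhds_zero_of_lt_one (by norm_num) (by norm_num)
    exact le_antisymm (ge_of_tendsto htend (Eventually.of_forall hb)) zero_le
  have hae : ∀ᵐ x ∂μ, x ∈ Ioo (0:ℝ) 1 := by
    rw [MeasureTheory.ae_iff]
    have hsub : {x : ℝ | ¬ x ∈ Ioo (0:ℝ) 1} ⊆ (Icc (0:ℝ) 1)ᶜ ∪ ({0} ∪ {1}) := by
      intro y hy
      simp only [mem_setOf_eq, mem_Ioo, not_and_or, not_lt] at hy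
      simp only [mem_union, mem_compl_iff, mem_Icc, mem_singleton_iff, not_and_or, not_le]
      rcases hy with h | h
      · rcases lt_or_eq_of_le h with h' | h'
        · left; left; exact h'
        · right; left; exact h'
      · rcases lt_or_eq_of_le h with h' | h'
        · left; right; exact h'
        · right; right; exact h'.symm
    refine measure_mono_null hsub ?_
    refine measure_union_null hμsupp (measure_union_null h0null h1null)
  -- lintegral finiteness
  have hres2 : μ.restrict (Ioo (0:ℝ) 1) = μ := Measure.restrict_eq_self_of_ae_mem hae
  have key : ∫⁻ x, ENNReal.ofReal (f x) ∂μ < ⊤ :=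
    aux_key Q μ hμ hQinv hQinv' hres2
  have hint : Integrable f μ := by
    refine ⟨hf_meas.aestronglyMeasurable, ?_⟩
    rw [hasFiniteIntegral_iff_ofReal (Eventually.of_forall hf_nonneg)]
    exact key
  constructor
  · rw [IntegrableOn, hres]
    exact hint
  · intro N hN
    have hint2 : Integrable (fun x => 2 * f x) μ := hint.const_mul 2
    have hcos : ∀ n : ℕ, Integrable (fun x => Real.cos (2 * π * n * x)) μ := by
      intro n
      apply Integrable.mono' (integrable_const (1:ℝ))
      · apply Measurable.aestronglyMeasurable; fun_prop
      · exact Eventually.of_forall fun x => by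
          rw [Real.norm_eq_abs]; exact Real.abs_cos_le_one _
    have hsum_int : Integrable (fun x => ∑ n ∈ Finset.Icc 1 N, Real.cos (2 * π * n * x)) μ :=
      integrable_finset_sum _ fun n _ => hcos n
    have hde : ∑ n ∈ Finset.Icc 1 N, d n
        = ∫ x, (∑ n ∈ Finset.Icc 1 N, Real.cos (2 * π * n * x)) ∂μ := by
      rw [integral_finset_sum _ fun n _ => hcos n]
      refine Finset.sum_congr rfl fun n _ => ?_
      rw [hd n, hres]
    rw [hde]
    have hb : |∫ x, (∑ n ∈ Finset.Icc 1 N, Real.cos (2 * π * n * x)) ∂μ|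
        ≤ ∫ x, 2 * f x ∂μ := by
      calc |∫ x, (∑ n ∈ Finset.Icc 1 N, Real.cos (2 * π * n * x)) ∂μ|
          ≤ ∫ x, |∑ n ∈ Finset.Icc 1 N, Real.cos (2 * π * n * x)| ∂μ :=
          by simpa [Real.norm_eq_abs] using
              norm_integral_le_integral_norm (μ := μ)
                (fun x => ∑ n ∈ Finset.Icc 1 N, Real.cos (2 * π * n * x))
        _ ≤ ∫ x, 2 * f x ∂μ := by
            apply integral_mono_ae hsum_int.abs hint2
            filter_upwards [hae] with x hx
            exact aux_sum_bound hx.1 hx.2 N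
    calc |∫ x, (∑ n ∈ Finset.Icc 1 N, Real.cos (2 * π * n * x)) ∂μ|
        ≤ ∫ x, 2 * f x ∂μ := hb
      _ = ∫ x in Icc (0:ℝ) 1, 2 * f x ∂μ := by rw [hres]
end

section
/- For every s ∈ ℂ with Re(s) > 0, the Dirichlet series Σ_{n=1}^{∞} d_n · n^{−s} converges, i.e., the partial sums Σ_{n=1}^{N} d_n · n^{−s} have a limit as N → ∞. -/
open MeasureTheory Real Set Filter Asymptotics ENNReal

lemma aux_cpow_diff {s : ℂ} (hs : 0 < s.re) (i : ℕ) :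
    ‖((i+2:ℕ):ℂ)^(-s) - ((i+1:ℕ):ℂ)^(-s)‖ ≤ ‖s‖ * ((i:ℝ)+1) ^ (-(s.re+1)) := by
  set t0 : ℝ := (i:ℝ)+1 with ht0def
  have h01 : (0:ℝ) < t0 := by positivity
  set f : ℝ → ℂ := fun t => (t:ℂ) ^ (-s) with hfdef
  set f' : ℝ → ℂ := fun t => (-s) * (t:ℂ) ^ (-s-1) with hf'def
  have hderiv : ∀ t ∈ Icc t0 (t0+1), HasDerivWithinAt f (f' t) (Icc t0 (t0+1)) t := by
    intro t ht
    have ht0 : (0:ℝ) < t := lt_of_lt_of_le h01 ht.1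
    have h := ((Complex.hasStrictDerivAt_cpow_const (c := -s)
      (Complex.ofReal_mem_slitPlane.2 ht0)).hasDerivAt).comp_ofReal
    exact h.hasDerivWithinAt
  have hbound : ∀ t ∈ Icc t0 (t0+1), ‖f' t‖ ≤ ‖s‖ * t0 ^ (-(s.re+1)) := by
    intro t ht
    have ht0 : (0:ℝ) < t := lt_of_lt_of_le h01 ht.1
    rw [hf'def]
    simp only [norm_mul, norm_neg]
    have h1 : ‖(t:ℂ)^(-s-1)‖ = t ^ (-(s.re+1)) := by
      rw [Complex.norm_cpow_eq_rpow_re_of_pos ht0]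
      congr 1
      simp [Complex.sub_re, Complex.neg_re]
      ring
    rw [h1]
    have h2 : t ^ (-(s.re+1)) ≤ t0 ^ (-(s.re+1)) :=
      Real.rpow_le_rpow_of_nonpos h01 ht.1 (by linarith)
    exact mul_le_mul_of_nonneg_left h2 (norm_nonneg s)
  have hmem1 : t0 ∈ Icc t0 (t0+1) := ⟨le_rfl, by linarith⟩
  have hmem2 : t0+1 ∈ Icc t0 (t0+1) := ⟨by linarith, le_rfl⟩
  have hMVT := Convex.norm_image_sub_le_of_norm_hasDerivWithin_le hderiv hbound
    (convex_Icc _ _) hmem1 hmem2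
  have he1 : f (t0+1) = ((i+2:ℕ):ℂ)^(-s) := by rw [hfdef, ht0def]; congr 1; push_cast; ring
  have he2 : f t0 = ((i+1:ℕ):ℂ)^(-s) := by rw [hfdef, ht0def]; congr 1; push_cast; ring
  rw [he1, he2] at hMVT
  simpa using hMVT

lemma aux_dirichlet {d : ℕ → ℝ} {C : ℝ}
    (hC : ∀ N : ℕ, |∑ n ∈ Finset.Icc 1 N, d n| ≤ C)
    {s : ℂ} (hs : 0 < s.re) :
    ∃ L : ℂ, Tendsto (fun N : ℕ => ∑ n ∈ Finset.Icc 1 N, (d n : ℂ) * (n : ℂ) ^ (-s))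
      atTop (nhds L) := by
  set b : ℕ → ℂ := fun i => ((i+1:ℕ):ℂ)^(-s) with hbdef
  set A : ℕ → ℂ := fun n => ∑ i ∈ Finset.range n, (d (i+1) : ℂ) with hAdef
  have hA : ∀ n, ‖A n‖ ≤ C := by
    intro n
    have : A n = ((∑ m ∈ Finset.Icc 1 n, d m : ℝ) : ℂ) := by
      rw [hAdef, ← Finset.Ico_add_one_right_eq_Icc, Finset.sum_Ico_eq_sum_range]
      simp only [Nat.add_sub_cancel]
      push_cast
      simp [add_comm]
    rw [this, Complex.norm_real, Real.norm_eq_abs]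
    exact hC n
  have hbnorm : ∀ m : ℕ, ‖b m‖ = ((m:ℝ)+1) ^ (-s.re) := by
    intro m
    rw [hbdef]
    rw [Complex.norm_natCast_cpow_of_pos (Nat.succ_pos m)]
    push_cast
    simp
  -- the series of differences
  set c : ℕ → ℂ := fun i => (b (i+1) - b i) * A (i+1) with hcdef
  have hcnorm : ∀ i, ‖c i‖ ≤ (‖s‖ * max C 0) * ((i:ℝ)+1) ^ (-(s.re+1)) := by
    intro i
    rw [hcdef]
    simp only [norm_mul]
    have h1 : ‖b (i+1) - b i‖ ≤ ‖s‖ * ((i:ℝ)+1) ^ (-(s.re+1)) := aux_cpow_diff hs i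
    have h2 : ‖A (i+1)‖ ≤ max C 0 := le_trans (hA (i+1)) (le_max_left _ _)
    calc ‖b (i+1) - b i‖ * ‖A (i+1)‖
        ≤ (‖s‖ * ((i:ℝ)+1) ^ (-(s.re+1))) * max C 0 := by
          apply mul_le_mul h1 h2 (norm_nonneg _)
          positivity
      _ = (‖s‖ * max C 0) * ((i:ℝ)+1) ^ (-(s.re+1)) := by ring
  have hmaj : Summable (fun i : ℕ => (‖s‖ * max C 0) * ((i:ℝ)+1) ^ (-(s.re+1))) := by
    apply Summable.mul_left
    have h1 : Summable (fun n : ℕ => ((n:ℝ) ^ (s.re+1))⁻¹) :=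
      Real.summable_nat_rpow_inv.2 (by linarith)
    have h2 := (summable_nat_add_iff 1).2 h1
    apply h2.congr
    intro n
    rw [← Real.rpow_neg (by positivity)]
    push_cast
    ring_nf
  have hcsum : Summable c := by
    apply Summable.of_norm
    exact Summable.of_nonneg_of_le (fun i => norm_nonneg _) hcnorm hmaj
  -- limit
  refine ⟨0 - ∑' i, c i, ?_⟩
  have key : ∀ N : ℕ, ∑ n ∈ Finset.Icc 1 N, (d n : ℂ) * (n : ℂ) ^ (-s)
      = b (N-1) * A N - ∑ i ∈ Finset.range (N-1), c i := by
    intro N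
    have e1 : ∑ n ∈ Finset.Icc 1 N, (d n : ℂ) * (n : ℂ) ^ (-s)
        = ∑ i ∈ Finset.range N, b i * (d (i+1) : ℂ) := by
      rw [← Finset.Ico_add_one_right_eq_Icc, Finset.sum_Ico_eq_sum_range]
      simp only [Nat.add_sub_cancel, Nat.succ_sub_one]
      apply Finset.sum_congr rfl
      intro i _
      rw [hbdef]
      push_cast
      rw [add_comm 1 (i:ℂ), mul_comm, add_comm 1 i]
    rw [e1]
    have := Finset.sum_range_by_parts b (fun i => (d (i+1) : ℂ)) N
    simpa [hcdef, hAdef, smul_eq_mul] using this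
  have h1 : Tendsto (fun N : ℕ => b (N-1) * A N) atTop (nhds 0) := by
    apply squeeze_zero_norm (a := fun N : ℕ => (((N-1:ℕ):ℝ)+1) ^ (-s.re) * max C 0)
    · intro N
      rw [norm_mul, hbnorm]
      exact mul_le_mul_of_nonneg_left (le_trans (hA N) (le_max_left _ _)) (by positivity)
    · have hrp : Tendsto (fun x : ℝ => x ^ (-s.re)) atTop (nhds 0) :=
        tendsto_rpow_neg_atTop hs
      have hnat : Tendsto (fun N : ℕ => ((N-1:ℕ):ℝ)+1) atTop atTop := by
        apply tendsto_atTop_add_const_right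
        exact tendsto_natCast_atTop_atTop.comp (tendsto_sub_atTop_nat 1)
      have := (hrp.comp hnat).mul_const (max C 0)
      simpa using this
  have h2 : Tendsto (fun N : ℕ => ∑ i ∈ Finset.range (N-1), c i) atTop (nhds (∑' i, c i)) :=
    (hcsum.hasSum.tendsto_sum_nat).comp (tendsto_sub_atTop_nat 1)
  have := h1.sub h2
  apply this.congr'
  filter_upwards with N using (key N).symm

lemma aux_Qpow (Q : ℝ → ℝ) (hQ1 : Q 1 = 1)
    (hQfun : ∀ x ∈ Icc (0:ℝ) 1, Q x = 2 * Q (x / (x + 1))) :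
    ∀ k : ℕ, Q (1/((k:ℝ)+1)) = (1/2)^k := by
  intro k
  induction k with
  | zero => simpa using hQ1
  | succ n ih =>
    have hmem : (1:ℝ)/((n:ℝ)+1) ∈ Icc (0:ℝ) 1 := by
      constructor
      · positivity
      · rw [div_le_one (by positivity)]
        linarith [Nat.cast_nonneg (α := ℝ) n]
    have h := hQfun _ hmem
    have harg : (1/((n:ℝ)+1)) / (1/((n:ℝ)+1) + 1) = 1/((n:ℝ)+1+1) := by
      have h1 : ((n:ℝ)+1) ≠ 0 := by positivity
      field_simp
      ring
    rw [harg, ih] at h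
    have : Q (1/((n:ℝ)+1+1)) = (1/2)^(n+1) := by
      rw [pow_succ]
      linarith
    rw [← this]
    congr 2
    push_cast
    ring

-- kernel bound
lemma aux_kernel (N : ℕ) (x : ℝ) (hx : x ∈ Ioo (0:ℝ) 1) :
    |∑ n ∈ Finset.Icc 1 N, Real.cos (2 * π * n * x)| ≤ 1/(2*x) + 1/(2*(1-x)) := by
  have hx0 := hx.1
  have hx1 := hx.2
  have hπ := Real.pi_pos
  have hsin : 0 < Real.sin (π * x) :=
    Real.sin_pos_of_pos_of_lt_pi (by positivity) (by nlinarith)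
  -- telescoping identity
  set f : ℕ → ℝ := fun i => Real.sin ((2*(i:ℝ)+1)*(π*x)) with hfdef
  have key : 2 * Real.sin (π*x) * (∑ n ∈ Finset.Icc 1 N, Real.cos (2 * π * n * x))
      = f N - f 0 := by
    have e1 : ∑ n ∈ Finset.Icc 1 N, Real.cos (2 * π * n * x)
        = ∑ i ∈ Finset.range N, Real.cos (2 * π * ((i:ℝ)+1) * x) := by
      rw [← Finset.Ico_add_one_right_eq_Icc, Finset.sum_Ico_eq_sum_range]
      simp only [Nat.add_sub_cancel, Nat.succ_sub_one]
      apply Finset.sum_congr rfl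
      intro i _
      push_cast
      ring_nf
    rw [e1, Finset.mul_sum]
    rw [← Finset.sum_range_sub f N]
    apply Finset.sum_congr rfl
    intro i _
    rw [hfdef]
    simp only []
    push_cast
    have ha : (2*((i:ℝ)+1)+1)*(π*x) = 2*π*((i:ℝ)+1)*x + π*x := by push_cast; ring
    have hb : (2*(i:ℝ)+1)*(π*x) = 2*π*((i:ℝ)+1)*x - π*x := by push_cast; ring
    rw [ha, hb, Real.sin_add, Real.sin_sub]
    ring
  have habs : |∑ n ∈ Finset.Icc 1 N, Real.cos (2 * π * n * x)| ≤ 1 / Real.sin (π*x) := by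
    rw [le_div_iff₀ hsin]
    have h2 : |2 * Real.sin (π*x) * (∑ n ∈ Finset.Icc 1 N, Real.cos (2 * π * n * x))| ≤ 2 := by
      rw [key]
      have := abs_sub (f N) (f 0)
      calc |f N - f 0| ≤ |f N| + |f 0| := abs_sub _ _
        _ ≤ 1 + 1 := add_le_add (Real.abs_sin_le_one _) (Real.abs_sin_le_one _)
        _ = 2 := by norm_num
    rw [abs_mul, abs_of_pos (by positivity : (0:ℝ) < 2 * Real.sin (π*x))] at h2
    nlinarith [abs_nonneg (∑ n ∈ Finset.Icc 1 N, Real.cos (2 * π * n * x))]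
  refine habs.trans ?_
  -- 1/sin(πx) ≤ 1/(2x) + 1/(2(1-x))
  rcases le_or_gt x (1/2) with hhalf | hhalf
  · have hsin2 : 2*x ≤ Real.sin (π*x) := by
      have := Real.mul_le_sin (x := π*x) (by positivity) (by nlinarith)
      calc 2*x = 2/π * (π*x) := by field_simp
        _ ≤ Real.sin (π*x) := this
    have h1 : 1/Real.sin (π*x) ≤ 1/(2*x) := by
      apply one_div_le_one_div_of_le (by positivity) hsin2
    have h2 : (0:ℝ) ≤ 1/(2*(1-x)) := div_nonneg zero_le_one (by linarith)
    linarith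
  · have hsin2 : 2*(1-x) ≤ Real.sin (π*x) := by
      have hrw : Real.sin (π*x) = Real.sin (π*(1-x)) := by
        rw [show π*(1-x) = π - π*x by ring, Real.sin_pi_sub]
      rw [hrw]
      have := Real.mul_le_sin (x := π*(1-x)) (by nlinarith) (by nlinarith)
      calc 2*(1-x) = 2/π * (π*(1-x)) := by field_simp
        _ ≤ Real.sin (π*(1-x)) := this
    have h1 : 1/Real.sin (π*x) ≤ 1/(2*(1-x)) := by
      apply one_div_le_one_div_of_le (by linarith) hsin2
    have h2 : (0:ℝ) ≤ 1/(2*x) := by positivity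
    linarith

section
variable (Q : ℝ → ℝ) (μ : Measure ℝ) [IsProbabilityMeasure μ]

lemma aux_atoms
    (hQcont : ContinuousOn Q (Icc 0 1))
    (hQ0 : Q 0 = 0) (hQ1 : Q 1 = 1)
    (hμ : ∀ a b : ℝ, 0 ≤ a → a ≤ b → b ≤ 1 →
      μ (Ioc a b) = ENNReal.ofReal (Q b - Q a))
    (hμsupp : μ (Icc (0:ℝ) 1)ᶜ = 0) :
    ∀ b ∈ Icc (0:ℝ) 1, μ {b} = 0 := by
  have hIcc1 : μ (Icc (0:ℝ) 1) = 1 := by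
    have h := measure_add_measure_compl (μ := μ) (s := Icc (0:ℝ) 1) measurableSet_Icc
    rw [hμsupp, measure_univ, add_zero] at h
    exact h
  have hIoc01 : μ (Ioc (0:ℝ) 1) = 1 := by
    rw [hμ 0 1 le_rfl zero_le_one le_rfl, hQ1, hQ0]
    norm_num
  have h0 : μ {(0:ℝ)} = 0 := by
    have hu : Icc (0:ℝ) 1 = {0} ∪ Ioc 0 1 := by
      ext y
      simp only [mem_Icc, mem_union, mem_singleton_iff, mem_Ioc]
      constructor
      · rintro ⟨h1, h2⟩
        rcases eq_or_lt_of_le h1 with h | h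
        · exact Or.inl h.symm
        · exact Or.inr ⟨h, h2⟩
      · rintro (rfl | ⟨h1, h2⟩)
        · exact ⟨le_rfl, zero_le_one⟩
        · exact ⟨h1.le, h2⟩
    have hdisj : Disjoint {(0:ℝ)} (Ioc 0 1) := by
      simp [Set.disjoint_left]
    have hum := measure_union hdisj measurableSet_Ioc (μ := μ)
    rw [← hu, hIcc1, hIoc01] at hum
    -- hum : 1 = μ {0} + 1
    exact (ENNReal.add_left_inj ENNReal.one_ne_top).mp
      (show μ {(0:ℝ)} + 1 = 0 + 1 by rw [zero_add]; exact hum.symm)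
  intro p hp
  rcases eq_or_lt_of_le hp.1 with h | h
  · rw [← h]; exact h0
  · -- 0 < p
    set a : ℕ → ℝ := fun j => p - p/(j+1) with hadef
    have ha0 : ∀ j : ℕ, 0 ≤ a j := by
      intro j
      rw [hadef]
      simp only []
      have : p/((j:ℝ)+1) ≤ p := by
        rw [div_le_iff₀ (by positivity)]
        nlinarith [Nat.cast_nonneg (α := ℝ) j]
      linarith
    have halt : ∀ j : ℕ, a j < p := by
      intro j
      rw [hadef]
      simp only []
      have : 0 < p/((j:ℝ)+1) := by positivity
      linarith
    have hamem : ∀ j : ℕ, a j ∈ Icc (0:ℝ) 1 := fun j => ⟨ha0 j, (halt j).le.trans hp.2⟩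
    have hbound : ∀ j : ℕ, μ {p} ≤ ENNReal.ofReal (Q p - Q (a j)) := by
      intro j
      rw [← hμ (a j) p (ha0 j) (halt j).le hp.2]
      apply measure_mono
      intro y hy
      rw [mem_singleton_iff] at hy
      subst hy
      exact ⟨halt j, le_rfl⟩
    have ha_tend : Tendsto a atTop (nhds p) := by
      rw [hadef]
      have h1 : Tendsto (fun j : ℕ => p/((j:ℝ)+1)) atTop (nhds 0) := by
        apply Tendsto.div_atTop (tendsto_const_nhds (x := p))
        exact tendsto_atTop_add_const_right _ _ tendsto_natCast_atTop_atTop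
      simpa using tendsto_const_nhds.sub h1
    have hQtend : Tendsto (fun j => Q (a j)) atTop (nhds (Q p)) := by
      have hc : ContinuousWithinAt Q (Icc 0 1) p := hQcont p hp
      apply hc.tendsto.comp
      apply tendsto_nhdsWithin_of_tendsto_nhds_of_eventually_within _ ha_tend
      exact Eventually.of_forall hamem
    have hof : Tendsto (fun j => ENNReal.ofReal (Q p - Q (a j))) atTop (nhds 0) := by
      have h1 : Tendsto (fun j => Q p - Q (a j)) atTop (nhds 0) := by
        have := (tendsto_const_nhds (x := Q p) (f := atTop (α := ℕ))).sub hQtend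
        simpa using this
      have := ENNReal.tendsto_ofReal h1
      simpa using this
    have := ge_of_tendsto hof (Eventually.of_forall hbound)
    simpa using this

end

section
variable {Q : ℝ → ℝ} {μ : Measure ℝ} [IsProbabilityMeasure μ]

lemma aux_summableT : Summable (fun k : ℕ => ((k:ℝ)+2) * (1/2:ℝ)^(k+1)) := by
  have s1 : Summable (fun k : ℕ => ((k:ℝ)) * (1/2:ℝ)^k) := by
    simpa using summable_pow_mul_geometric_of_norm_lt_one 1 (r := (1/2:ℝ)) (by norm_num)
  have s2 : Summable (fun k : ℕ => (1/2:ℝ)^k) := summable_geometric_of_lt_one (by norm_num) (by norm_num)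
  have := (s1.mul_left (1/2)).add s2
  apply this.congr
  intro k
  ring

lemma aux_lint1
    (hQpow : ∀ k : ℕ, Q (1/((k:ℝ)+1)) = (1/2:ℝ)^k)
    (hμ : ∀ a b : ℝ, 0 ≤ a → a ≤ b → b ≤ 1 →
      μ (Ioc a b) = ENNReal.ofReal (Q b - Q a)) :
    ∫⁻ x in Ioo (0:ℝ) 1, ENNReal.ofReal (1/(2*x)) ∂μ
      ≤ ∑' k : ℕ, ENNReal.ofReal (((k:ℝ)+2) * (1/2:ℝ)^(k+1)) := by
  set F : ℕ → ℝ → ℝ≥0∞ := fun k =>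
    (Ioc (1/((k:ℝ)+2)) (1/((k:ℝ)+1))).indicator (fun _ => ENNReal.ofReal ((k:ℝ)+2)) with hFdef
  have hFmeas : ∀ k, Measurable (F k) := fun k => measurable_const.indicator measurableSet_Ioc
  have hpt1 : ∀ x ∈ Ioo (0:ℝ) 1, ENNReal.ofReal (1/(2*x)) ≤ ∑' k, F k x := by
    intro x hx
    have hx0 := hx.1
    have hx1 := hx.2
    set m := ⌊1/x⌋₊ with hm
    have hm1 : 1 ≤ m := by
      apply Nat.le_floor
      rw [Nat.cast_one, le_div_iff₀ hx0]
      linarith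
    have hmpos : (0:ℝ) < (m:ℝ) := by exact_mod_cast hm1
    have hfl : (m:ℝ) ≤ 1/x := Nat.floor_le (by positivity)
    have hfl2 : 1/x < (m:ℝ)+1 := Nat.lt_floor_add_one _
    have hxle : x ≤ 1/(m:ℝ) := by
      rw [le_div_iff₀ hmpos]
      calc x * m ≤ x * (1/x) := by
            apply mul_le_mul_of_nonneg_left hfl hx0.le
        _ = 1 := by field_simp
    have hxgt : 1/((m:ℝ)+1) < x := by
      rw [div_lt_iff₀ (by positivity)]
      have := mul_lt_mul_of_pos_left hfl2 hx0
      rw [mul_one_div, div_self hx0.ne'] at this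
      linarith
    refine le_trans ?_ (ENNReal.le_tsum (m-1))
    have hc1 : ((m-1:ℕ):ℝ) + 1 = (m:ℝ) := by
      rw [Nat.cast_sub hm1]
      norm_num
    have hc2 : ((m-1:ℕ):ℝ) + 2 = (m:ℝ) + 1 := by
      rw [Nat.cast_sub hm1]
      norm_num
      ring
    have hmem : x ∈ Ioc (1/(((m-1:ℕ):ℝ)+2)) (1/(((m-1:ℕ):ℝ)+1)) := by
      rw [hc1, hc2]
      exact ⟨hxgt, hxle⟩
    rw [hFdef]
    simp only [indicator_of_mem hmem]
    apply ENNReal.ofReal_le_ofReal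
    rw [hc2]
    calc 1/(2*x) ≤ 1/x := by
          apply one_div_le_one_div_of_le hx0
          linarith
      _ ≤ (m:ℝ)+1 := by linarith
  calc ∫⁻ x in Ioo (0:ℝ) 1, ENNReal.ofReal (1/(2*x)) ∂μ
      ≤ ∫⁻ x in Ioo (0:ℝ) 1, (∑' k, F k x) ∂μ :=
        setLIntegral_mono (Measurable.ennreal_tsum hFmeas) hpt1
    _ ≤ ∫⁻ x, (∑' k, F k x) ∂μ := setLIntegral_le_lintegral _ _
    _ = ∑' k, ∫⁻ x, F k x ∂μ := lintegral_tsum (fun k => (hFmeas k).aemeasurable)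
    _ ≤ ∑' k : ℕ, ENNReal.ofReal (((k:ℝ)+2) * (1/2:ℝ)^(k+1)) := by
        apply ENNReal.tsum_le_tsum
        intro k
        have hk2 : (0:ℝ) < (k:ℝ)+2 := by positivity
        have hk1 : (0:ℝ) < (k:ℝ)+1 := by positivity
        have e1 : ∫⁻ x, F k x ∂μ = ENNReal.ofReal ((k:ℝ)+2) * μ (Ioc (1/((k:ℝ)+2)) (1/((k:ℝ)+1))) := by
          rw [hFdef]
          simp only []
          rw [lintegral_indicator measurableSet_Ioc]
          simp [lintegral_const, Measure.restrict_apply, univ_inter]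
        rw [e1]
        have e2 : μ (Ioc (1/((k:ℝ)+2)) (1/((k:ℝ)+1))) = ENNReal.ofReal ((1/2:ℝ)^(k+1)) := by
          rw [hμ _ _ (by positivity) (by apply one_div_le_one_div_of_le hk1; linarith)
            (by rw [div_le_one hk1]; linarith)]
          have q1 : Q (1/((k:ℝ)+1)) = (1/2:ℝ)^k := hQpow k
          have q2 : Q (1/((k:ℝ)+2)) = (1/2:ℝ)^(k+1) := by
            have := hQpow (k+1)
            push_cast at this
            rw [show ((k:ℝ)+1+1) = (k:ℝ)+2 by ring] at this
            exact this
          rw [q1, q2]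
          congr 1
          rw [pow_succ]
          ring
        rw [e2, ← ENNReal.ofReal_mul hk2.le]
end

section
variable {Q : ℝ → ℝ} {μ : Measure ℝ} [IsProbabilityMeasure μ]

lemma aux_lint2
    (hQpow : ∀ k : ℕ, Q (1/((k:ℝ)+1)) = (1/2:ℝ)^k)
    (hQsymm : ∀ x ∈ Icc (0:ℝ) 1, Q x = 1 - Q (1 - x))
    (hμ : ∀ a b : ℝ, 0 ≤ a → a ≤ b → b ≤ 1 →
      μ (Ioc a b) = ENNReal.ofReal (Q b - Q a))
    (hatoms : ∀ b ∈ Icc (0:ℝ) 1, μ {b} = 0) :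
    ∫⁻ x in Ioo (0:ℝ) 1, ENNReal.ofReal (1/(2*(1-x))) ∂μ
      ≤ ∑' k : ℕ, ENNReal.ofReal (((k:ℝ)+2) * (1/2:ℝ)^(k+1)) := by
  set F : ℕ → ℝ → ℝ≥0∞ := fun k =>
    (Ico (1-1/((k:ℝ)+1)) (1-1/((k:ℝ)+2))).indicator (fun _ => ENNReal.ofReal ((k:ℝ)+2)) with hFdef
  have hFmeas : ∀ k, Measurable (F k) := fun k => measurable_const.indicator measurableSet_Ico
  have hpt1 : ∀ x ∈ Ioo (0:ℝ) 1, ENNReal.ofReal (1/(2*(1-x))) ≤ ∑' k, F k x := by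
    intro x hx
    set u : ℝ := 1 - x with hudef
    have hu0 : 0 < u := by rw [hudef]; linarith [hx.2]
    have hu1 : u < 1 := by rw [hudef]; linarith [hx.1]
    set m := ⌊1/u⌋₊ with hm
    have hm1 : 1 ≤ m := by
      apply Nat.le_floor
      rw [Nat.cast_one, le_div_iff₀ hu0]
      linarith
    have hmpos : (0:ℝ) < (m:ℝ) := by exact_mod_cast hm1
    have hfl : (m:ℝ) ≤ 1/u := Nat.floor_le (by positivity)
    have hfl2 : 1/u < (m:ℝ)+1 := Nat.lt_floor_add_one _
    have hule : u ≤ 1/(m:ℝ) := by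
      rw [le_div_iff₀ hmpos]
      calc u * m ≤ u * (1/u) := mul_le_mul_of_nonneg_left hfl hu0.le
        _ = 1 := by field_simp
    have hugt : 1/((m:ℝ)+1) < u := by
      rw [div_lt_iff₀ (by positivity)]
      have := mul_lt_mul_of_pos_left hfl2 hu0
      rw [mul_one_div, div_self hu0.ne'] at this
      linarith
    refine le_trans ?_ (ENNReal.le_tsum (m-1))
    have hc1 : ((m-1:ℕ):ℝ) + 1 = (m:ℝ) := by
      rw [Nat.cast_sub hm1]; norm_num
    have hc2 : ((m-1:ℕ):ℝ) + 2 = (m:ℝ) + 1 := by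
      rw [Nat.cast_sub hm1]; norm_num; ring
    have hmem : x ∈ Ico (1-1/(((m-1:ℕ):ℝ)+1)) (1-1/(((m-1:ℕ):ℝ)+2)) := by
      rw [hc1, hc2]
      constructor
      · have : x = 1 - u := by rw [hudef]; ring
        rw [this]
        linarith
      · have : x = 1 - u := by rw [hudef]; ring
        rw [this]
        have : 1/((m:ℝ)+1) < u := hugt
        linarith
    rw [hFdef]
    simp only [indicator_of_mem hmem]
    apply ENNReal.ofReal_le_ofReal
    rw [hc2]
    calc 1/(2*(1-x)) = 1/(2*u) := by rw [hudef]
      _ ≤ 1/u := by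
          apply one_div_le_one_div_of_le hu0
          linarith
      _ ≤ (m:ℝ)+1 := by linarith
  calc ∫⁻ x in Ioo (0:ℝ) 1, ENNReal.ofReal (1/(2*(1-x))) ∂μ
      ≤ ∫⁻ x in Ioo (0:ℝ) 1, (∑' k, F k x) ∂μ :=
        setLIntegral_mono (Measurable.ennreal_tsum hFmeas) hpt1
    _ ≤ ∫⁻ x, (∑' k, F k x) ∂μ := setLIntegral_le_lintegral _ _
    _ = ∑' k, ∫⁻ x, F k x ∂μ := lintegral_tsum (fun k => (hFmeas k).aemeasurable)
    _ ≤ ∑' k : ℕ, ENNReal.ofReal (((k:ℝ)+2) * (1/2:ℝ)^(k+1)) := by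
        apply ENNReal.tsum_le_tsum
        intro k
        have hk2 : (0:ℝ) < (k:ℝ)+2 := by positivity
        have hk1 : (0:ℝ) < (k:ℝ)+1 := by positivity
        have hk12 : 1/((k:ℝ)+2) ≤ 1/((k:ℝ)+1) := by
          apply one_div_le_one_div_of_le hk1; linarith
        have hk11 : 1/((k:ℝ)+1) ≤ 1 := by rw [div_le_one hk1]; linarith
        have hk21 : 1/((k:ℝ)+2) ≤ 1 := by rw [div_le_one hk2]; linarith
        have hk1p : (0:ℝ) < 1/((k:ℝ)+1) := by positivity
        have hk2p : (0:ℝ) < 1/((k:ℝ)+2) := by positivity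
        have e1 : ∫⁻ x, F k x ∂μ = ENNReal.ofReal ((k:ℝ)+2)
            * μ (Ico (1-1/((k:ℝ)+1)) (1-1/((k:ℝ)+2))) := by
          rw [hFdef]
          simp only []
          rw [lintegral_indicator measurableSet_Ico]
          simp [lintegral_const, Measure.restrict_apply, univ_inter]
        rw [e1]
        have hsub : Ico (1-1/((k:ℝ)+1)) (1-1/((k:ℝ)+2))
            ⊆ {1-1/((k:ℝ)+1)} ∪ Ioc (1-1/((k:ℝ)+1)) (1-1/((k:ℝ)+2)) := by
          intro y hy
          rcases eq_or_lt_of_le hy.1 with h | h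
          · exact Or.inl (by simp [← h])
          · exact Or.inr ⟨h, hy.2.le⟩
        have hmeas2 : μ (Ico (1-1/((k:ℝ)+1)) (1-1/((k:ℝ)+2))) ≤ ENNReal.ofReal ((1/2:ℝ)^(k+1)) := by
          refine le_trans (measure_mono hsub) (le_trans (measure_union_le _ _) ?_)
          rw [hatoms _ ⟨by linarith, by linarith⟩, zero_add]
          rw [hμ _ _ (by linarith) (by linarith) (by linarith)]
          apply ENNReal.ofReal_le_ofReal
          have q1 : Q (1-1/((k:ℝ)+1)) = 1 - (1/2:ℝ)^k := by
            have hs := hQsymm (1-1/((k:ℝ)+1)) ⟨by linarith, by linarith⟩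
            rw [show (1:ℝ) - (1-1/((k:ℝ)+1)) = 1/((k:ℝ)+1) by ring, hQpow k] at hs
            exact hs
          have q2 : Q (1-1/((k:ℝ)+2)) = 1 - (1/2:ℝ)^(k+1) := by
            have hs := hQsymm (1-1/((k:ℝ)+2)) ⟨by linarith, by linarith⟩
            rw [show (1:ℝ) - (1-1/((k:ℝ)+2)) = 1/((k:ℝ)+2) by ring] at hs
            have := hQpow (k+1)
            push_cast at this
            rw [show ((k:ℝ)+1+1) = (k:ℝ)+2 by ring] at this
            rw [this] at hs
            exact hs
          rw [q1, q2, pow_succ]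
          ring_nf
          linarith [pow_nonneg (by norm_num : (0:ℝ) ≤ 1/2) k]
        calc ENNReal.ofReal ((k:ℝ)+2) * μ (Ico (1-1/((k:ℝ)+1)) (1-1/((k:ℝ)+2)))
            ≤ ENNReal.ofReal ((k:ℝ)+2) * ENNReal.ofReal ((1/2:ℝ)^(k+1)) := by
              exact mul_le_mul_right hmeas2 _
          _ = ENNReal.ofReal (((k:ℝ)+2) * (1/2:ℝ)^(k+1)) := by
              rw [← ENNReal.ofReal_mul hk2.le]
end

lemma aux_bounded (Q : ℝ → ℝ) (μ : Measure ℝ) [IsProbabilityMeasure μ]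
    (hQcont : ContinuousOn Q (Icc 0 1))
    (hQ0 : Q 0 = 0) (hQ1 : Q 1 = 1)
    (hQsymm : ∀ x ∈ Icc (0:ℝ) 1, Q x = 1 - Q (1 - x))
    (hQfun : ∀ x ∈ Icc (0:ℝ) 1, Q x = 2 * Q (x / (x + 1)))
    (hμ : ∀ a b : ℝ, 0 ≤ a → a ≤ b → b ≤ 1 →
      μ (Ioc a b) = ENNReal.ofReal (Q b - Q a))
    (hμsupp : μ (Icc (0:ℝ) 1)ᶜ = 0)
    (d : ℕ → ℝ)
    (hd : ∀ n : ℕ, d n = ∫ x in Icc (0:ℝ) 1, Real.cos (2 * π * n * x) ∂μ) :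
    ∃ C : ℝ, ∀ N : ℕ, |∑ n ∈ Finset.Icc 1 N, d n| ≤ C := by
  set T : ℝ≥0∞ := ∑' k : ℕ, ENNReal.ofReal (((k:ℝ)+2) * (1/2:ℝ)^(k+1)) with hT
  have hTne : T ≠ ⊤ := by
    rw [hT, ← ENNReal.ofReal_tsum_of_nonneg (fun k => by positivity) aux_summableT]
    exact ENNReal.ofReal_ne_top
  have hQpow := aux_Qpow Q hQ1 hQfun
  have hatoms := aux_atoms Q μ hQcont hQ0 hQ1 hμ hμsupp
  refine ⟨(T + T).toReal, ?_⟩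
  intro N
  have hint : ∀ n : ℕ, Integrable (fun x => Real.cos (2*π*(n:ℝ)*x)) (μ.restrict (Icc 0 1)) := by
    intro n
    refine ⟨Continuous.aestronglyMeasurable (by fun_prop), ?_⟩
    apply HasFiniteIntegral.of_bounded (C := 1)
    filter_upwards with x
    simpa using Real.abs_cos_le_one _
  have hDS : ∑ n ∈ Finset.Icc 1 N, d n
      = ∫ x in Icc (0:ℝ) 1, (∑ n ∈ Finset.Icc 1 N, Real.cos (2*π*(n:ℝ)*x)) ∂μ := by
    rw [integral_finset_sum _ (fun n _ => hint n)]
    exact Finset.sum_congr rfl (fun n _ => hd n)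
  have hres : μ.restrict (Icc (0:ℝ) 1) = μ.restrict (Ioo 0 1) := by
    apply Measure.restrict_congr_set
    rw [ae_eq_set]
    constructor
    · rw [Icc_diff_Ioo_same zero_le_one]
      have hsub : ({0,1} : Set ℝ) ⊆ {0} ∪ {1} := by
        intro y hy
        simpa [Set.union_def] using hy
      have hle : μ ({0,1} : Set ℝ) ≤ 0 := by
        refine le_trans (measure_mono hsub) (le_trans (measure_union_le _ _) ?_)
        rw [hatoms 0 ⟨le_rfl, zero_le_one⟩, hatoms 1 ⟨zero_le_one, le_rfl⟩, add_zero]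
      exact le_antisymm hle (by simp)
    · rw [diff_eq_empty.2 Ioo_subset_Icc_self]
      exact measure_empty
  rw [hDS, hres]
  rw [← Real.norm_eq_abs]
  refine (norm_integral_le_lintegral_norm _).trans ?_
  have hmeas1 : Measurable (fun x : ℝ => ENNReal.ofReal (1/(2*x))) := by
    apply Measurable.ennreal_ofReal
    simp only [one_div]
    exact (measurable_id.const_mul 2).inv
  have hmeas2 : Measurable (fun x : ℝ => ENNReal.ofReal (1/(2*(1-x)))) := by
    apply Measurable.ennreal_ofReal
    simp only [one_div]
    exact ((measurable_const.sub measurable_id).const_mul 2).inv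
  have h2 : ∫⁻ x in Ioo (0:ℝ) 1,
      ENNReal.ofReal ‖∑ n ∈ Finset.Icc 1 N, Real.cos (2*π*(n:ℝ)*x)‖ ∂μ ≤ T + T := by
    calc ∫⁻ x in Ioo (0:ℝ) 1, ENNReal.ofReal ‖∑ n ∈ Finset.Icc 1 N, Real.cos (2*π*(n:ℝ)*x)‖ ∂μ
        ≤ ∫⁻ x in Ioo (0:ℝ) 1,
            (ENNReal.ofReal (1/(2*x)) + ENNReal.ofReal (1/(2*(1-x)))) ∂μ := by
          apply setLIntegral_mono (hmeas1.add hmeas2)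
          intro x hx
          refine le_trans (ENNReal.ofReal_le_ofReal ?_) (ENNReal.ofReal_add_le)
          rw [Real.norm_eq_abs]
          exact aux_kernel N x hx
      _ = (∫⁻ x in Ioo (0:ℝ) 1, ENNReal.ofReal (1/(2*x)) ∂μ)
          + ∫⁻ x in Ioo (0:ℝ) 1, ENNReal.ofReal (1/(2*(1-x))) ∂μ :=
          lintegral_add_left hmeas1 _
      _ ≤ T + T := add_le_add (aux_lint1 hQpow hμ) (aux_lint2 hQpow hQsymm hμ hatoms)
  have hfin : T + T ≠ ⊤ := by
    simp [ENNReal.add_ne_top, hTne]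
  exact le_trans (ENNReal.toReal_mono hfin h2) le_rfl

theorem stmt_2
    (Q : ℝ → ℝ) (μ : Measure ℝ) [IsProbabilityMeasure μ]
    (hQcont : ContinuousOn Q (Icc 0 1))
    (hQmono : StrictMonoOn Q (Icc 0 1))
    (hQ0 : Q 0 = 0) (hQ1 : Q 1 = 1)
    (hQsymm : ∀ x ∈ Icc (0:ℝ) 1, Q x = 1 - Q (1 - x))
    (hQfun : ∀ x ∈ Icc (0:ℝ) 1, Q x = 2 * Q (x / (x + 1)))
    (hμ : ∀ a b : ℝ, 0 ≤ a → a ≤ b → b ≤ 1 →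
      μ (Ioc a b) = ENNReal.ofReal (Q b - Q a))
    (hμsupp : μ (Icc (0:ℝ) 1)ᶜ = 0)
    (d : ℕ → ℝ)
    (hd : ∀ n : ℕ, d n = ∫ x in Icc (0:ℝ) 1, Real.cos (2 * π * n * x) ∂μ)
:
    ∀ s : ℂ, 0 < s.re →
      ∃ L : ℂ, Tendsto (fun N : ℕ => ∑ n ∈ Finset.Icc 1 N, (d n : ℂ) * (n : ℂ) ^ (-s))
        atTop (nhds L) := by
  intro s hs
  obtain ⟨C, hC⟩ := aux_bounded Q μ hQcont hQ0 hQ1 hQsymm hQfun hμ hμsupp d hd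
  exact aux_dirichlet hC hs
end

section
/- For every integer L ≥ 0, the moment m_L satisfies m_L = 1/(L+1) − 2·Σ_{n=1}^{∞} d_n · Σ_{v=1}^{⌊L/2⌋} (−1)^v · L! / ((L−2v+1)! · (2πn)^{2v}), where the outer series over n converges absolutely (for L ≤ 1 the inner sum is empty and the identity reads m_L = 1/(L+1)). -/
open MeasureTheory Real Set Filter Asymptotics Topology

lemma aux_bernoulliFun_zero (x : ℝ) : bernoulliFun 0 x = 1 := by
  simp [bernoulliFun, Polynomial.bernoulli_zero]

lemma aux_refl (k : ℕ) : ∀ x : ℝ, bernoulliFun k (1 - x) = (-1)^k * bernoulliFun k x := by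
  induction k with
  | zero => intro x; simp [aux_bernoulliFun_zero]
  | succ k ih =>
    intro x
    have hd : ∀ y : ℝ, HasDerivAt
        (fun y => bernoulliFun (k+1) (1 - y) - (-1)^(k+1) * bernoulliFun (k+1) y) 0 y := by
      intro y
      have hgy : HasDerivAt (fun y : ℝ => 1 - y) (-1) y := by
        simpa using (hasDerivAt_id y).const_sub 1
      have h1 : HasDerivAt (fun y : ℝ => bernoulliFun (k+1) (1 - y))
          (((k:ℝ)+1) * bernoulliFun k (1 - y) * (-1)) y := by
        have := (hasDerivAt_bernoulliFun (k+1) (1 - y)).comp y hgy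
        simpa [Function.comp_def] using this
      have h2 : HasDerivAt (fun y : ℝ => (-1)^(k+1) * bernoulliFun (k+1) y)
          (((-1:ℝ))^(k+1) * (((k+1:ℕ):ℝ) * bernoulliFun (k+1-1) y)) y :=
        (hasDerivAt_bernoulliFun (k+1) y).const_mul ((-1:ℝ)^(k+1))
      have h3 := h1.sub h2
      refine h3.congr_deriv ?_
      simp only [Nat.add_sub_cancel, ih]
      push_cast
      ring
    have hconst := is_const_of_deriv_eq_zero (f := fun y =>
        bernoulliFun (k+1) (1 - y) - (-1)^(k+1) * bernoulliFun (k+1) y)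
      (fun z => (hd z).differentiableAt) (fun z => (hd z).deriv) x 0
    simp only [sub_zero] at hconst
    have h0 : bernoulliFun (k+1) 1 - (-1)^(k+1) * bernoulliFun (k+1) 0 = 0 := by
      rw [bernoulliFun_eval_one, bernoulliFun_eval_zero]
      rcases eq_or_ne k 0 with rfl | hk
      · norm_num [bernoulli_one]
      · have hsign : ((-1:ℝ))^(k+1) * (bernoulli (k+1) : ℝ) = (bernoulli (k+1) : ℝ) := by
          rcases Nat.even_or_odd (k+1) with he | ho
          · rw [he.neg_one_pow, one_mul]
          · rw [bernoulli_eq_bernoulli'_of_ne_one (by omega),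
              bernoulli'_eq_zero_of_odd ho (by omega)]
            norm_num
        rw [if_neg (by omega : ¬ k + 1 = 1), hsign]; ring
    rw [h0] at hconst
    linarith [hconst]

lemma aux_monomial (L : ℕ) (x : ℝ) :
    ((L:ℝ)+1) * x^L
      = ∑ k ∈ Finset.range (L+1), (((L+1).choose k : ℕ) : ℝ) * bernoulliFun k x := by
  have h := Polynomial.sum_bernoulli L
  have h2 := congrArg (fun p : Polynomial ℚ => Polynomial.eval x
      (Polynomial.map (algebraMap ℚ ℝ) p)) h
  simp only [Polynomial.map_sum, Polynomial.eval_finset_sum] at h2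
  rw [Polynomial.map_monomial, Polynomial.eval_monomial] at h2
  simp only [Polynomial.map_smul, Polynomial.eval_smul, smul_eq_mul, eq_ratCast,
    Rat.cast_natCast, Rat.cast_add, Rat.cast_one] at h2
  simp only [bernoulliFun]
  exact h2.symm

lemma aux_summable (L : ℕ) : Summable (fun n : ℕ => ∑ v ∈ Finset.Icc 1 (L/2),
    (-1:ℝ)^v * (L.factorial:ℝ) / (((L - 2*v + 1).factorial:ℝ) * (2*π*(n:ℝ))^(2*v))) := by
  apply summable_sum
  intro v hv
  have hv1 : 1 ≤ v := (Finset.mem_Icc.mp hv).1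
  have h2v : 2 ≤ 2*v := by omega
  have hbase : Summable (fun n : ℕ => 1 / (n:ℝ)^(2*v)) := by
    apply Real.summable_one_div_nat_pow.mpr
    omega
  have := (hbase.mul_left ((-1:ℝ)^v * (L.factorial:ℝ)
      / (((L - 2*v + 1).factorial:ℝ) * (2*π)^(2*v))))
  apply this.congr
  intro n
  simp only [mul_pow, div_eq_mul_inv, mul_inv]
  ring


lemma aux_coef (L v : ℕ) (hv : 2*v ≤ L) :
    (((L+1).choose (2*v) : ℕ) : ℝ)
      = ((L:ℝ)+1) * ((L.factorial : ℝ) / (((L - 2*v + 1).factorial : ℝ) * (((2*v).factorial : ℝ)))) := by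
  have h := Nat.choose_mul_factorial_mul_factorial (show 2*v ≤ L+1 by omega)
  have hsub : L + 1 - 2*v = L - 2*v + 1 := by omega
  rw [hsub] at h
  have hc : (((L+1).choose (2*v) : ℕ) : ℝ) * ((2*v).factorial : ℝ) * ((L - 2*v + 1).factorial : ℝ)
      = ((L:ℝ)+1) * (L.factorial : ℝ) := by
    exact_mod_cast congrArg (fun n : ℕ => (n : ℝ)) (by rw [h, ← Nat.factorial_succ])
  have h1 : ((2*v).factorial : ℝ) ≠ 0 := Nat.cast_ne_zero.mpr (Nat.factorial_ne_zero _)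
  have h2 : ((L - 2*v + 1).factorial : ℝ) ≠ 0 := Nat.cast_ne_zero.mpr (Nat.factorial_ne_zero _)
  field_simp
  linarith [hc]

lemma aux_gsum (L : ℕ) (x : ℝ) :
    (x^L + (1-x)^L)/2 = 1/((L:ℝ)+1) + ∑ v ∈ Finset.Icc 1 (L/2),
      (L.factorial : ℝ)/(((L - 2*v + 1).factorial : ℝ) * ((2*v).factorial : ℝ))
        * bernoulliFun (2*v) x := by
  have hL : ((L:ℝ)+1) ≠ 0 := by positivity
  have h1 := aux_monomial L x
  have h2 := aux_monomial L (1-x)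
  simp only [show (1:ℝ) - (1-x) = x by ring, aux_refl] at h2
  have h3 : ((L:ℝ)+1) * (x^L + (1-x)^L)
      = ∑ k ∈ Finset.range (L+1),
          (((L+1).choose k : ℕ) : ℝ) * ((1 + (-1:ℝ)^k)) * bernoulliFun k x := by
    rw [mul_add, h1, h2, ← Finset.sum_add_distrib]
    apply Finset.sum_congr rfl
    intro k _
    ring
  have hfilter : Finset.filter (fun k => Even k) (Finset.range (L+1))
      = Finset.image (fun v => 2*v) (Finset.range (L/2+1)) := by
    ext a
    simp only [Finset.mem_filter, Finset.mem_range, Finset.mem_image, Nat.even_iff]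
    constructor
    · rintro ⟨ha, he⟩
      refine ⟨a/2, by omega, by omega⟩
    · rintro ⟨v, hv, rfl⟩
      omega
  have hzero : ∀ k ∈ Finset.range (L+1),
      (((L+1).choose k : ℕ) : ℝ) * ((1 + (-1:ℝ)^k)) * bernoulliFun k x ≠ 0 → Even k := by
    intro k _ hne
    by_contra hodd
    rw [Odd.neg_one_pow (Nat.not_even_iff_odd.mp hodd)] at hne
    simp at hne
  have h4 : ∑ k ∈ Finset.range (L+1),
        (((L+1).choose k : ℕ) : ℝ) * ((1 + (-1:ℝ)^k)) * bernoulliFun k x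
      = ∑ v ∈ Finset.range (L/2+1),
        (((L+1).choose (2*v) : ℕ) : ℝ) * 2 * bernoulliFun (2*v) x := by
    rw [← Finset.sum_filter_of_ne hzero, hfilter,
      Finset.sum_image (by intro a _ b _ hab; simp only at hab; omega)]
    apply Finset.sum_congr rfl
    intro v _
    rw [Even.neg_one_pow ⟨v, by ring⟩]
    norm_num
  have hins : Finset.range (L/2+1) = insert 0 (Finset.Icc 1 (L/2)) := by
    ext a
    simp only [Finset.mem_range, Finset.mem_insert, Finset.mem_Icc]
    omega
  rw [h4, hins, Finset.sum_insert (by simp)] at h3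
  simp only [Nat.mul_zero, Nat.choose_zero_right, aux_bernoulliFun_zero, Nat.cast_one] at h3
  have h5 : ∑ v ∈ Finset.Icc 1 (L/2), (((L+1).choose (2*v) : ℕ) : ℝ) * 2 * bernoulliFun (2*v) x
      = ((L:ℝ)+1) * (2 * ∑ v ∈ Finset.Icc 1 (L/2),
          (L.factorial : ℝ)/(((L - 2*v + 1).factorial : ℝ) * ((2*v).factorial : ℝ))
            * bernoulliFun (2*v) x) := by
    rw [Finset.mul_sum, Finset.mul_sum]
    apply Finset.sum_congr rfl
    intro v hv
    rw [aux_coef L v (by simp only [Finset.mem_Icc] at hv; omega)]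
    ring
  rw [h5] at h3
  set S := ∑ v ∈ Finset.Icc 1 (L/2),
      (L.factorial : ℝ)/(((L - 2*v + 1).factorial : ℝ) * ((2*v).factorial : ℝ))
        * bernoulliFun (2*v) x with hS
  field_simp
  linear_combination h3


lemma aux_key_s4 (L : ℕ) {x : ℝ} (hx : x ∈ Icc (0:ℝ) 1) :
    HasSum (fun n : ℕ => (∑ v ∈ Finset.Icc 1 (L/2),
        (-1:ℝ)^v * (L.factorial:ℝ) / (((L - 2*v + 1).factorial:ℝ) * (2*π*(n:ℝ))^(2*v)))
        * Real.cos (2*π*(n:ℝ)*x))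
      ((1/((L:ℝ)+1) - (x^L + (1-x)^L)/2)/2) := by
  classical
  set c : ℕ → ℝ := fun v => (-1:ℝ)^(v+1) * 2 * (L.factorial : ℝ)
      / (((L - 2*v + 1).factorial : ℝ) * (2*π)^(2*v)) with hc
  have hterm : ∀ v ∈ Finset.Icc 1 (L/2), HasSum
      (fun n : ℕ => c v * (1 / (n:ℝ)^(2*v) * Real.cos (2*π*(n:ℝ)*x)))
      ((L.factorial : ℝ)/(((L - 2*v + 1).factorial : ℝ) * ((2*v).factorial : ℝ))
        * bernoulliFun (2*v) x) := by
    intro v hv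
    have hv1 : v ≠ 0 := by simp only [Finset.mem_Icc] at hv; omega
    have h := (hasSum_one_div_nat_pow_mul_cos hv1 hx).mul_left (c v)
    convert h using 1
    · rfl
    have hP : ((2:ℝ)*π)^(2*v) ≠ 0 := by positivity
    have hs : (-1:ℝ)^(v+1) * (-1:ℝ)^(v+1) = 1 := by
      rw [← pow_add]
      exact Even.neg_one_pow ⟨v+1, by ring⟩
    show (L.factorial : ℝ)/(((L - 2*v + 1).factorial : ℝ) * ((2*v).factorial : ℝ))
        * bernoulliFun (2*v) x
      = c v * ((-1:ℝ)^(v+1) * (2*π)^(2*v) / 2 / ((2*v).factorial : ℝ)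
          * Polynomial.eval x (Polynomial.map (algebraMap ℚ ℝ) (Polynomial.bernoulli (2*v))))
    have hexp : c v * ((-1:ℝ)^(v+1) * (2*π)^(2*v) / 2 / ((2*v).factorial : ℝ)
          * bernoulliFun (2*v) x)
        = ((-1:ℝ)^(v+1) * (-1:ℝ)^(v+1)) * (((2*π)^(2*v) / (2*π)^(2*v)) *
            ((L.factorial : ℝ)/(((L - 2*v + 1).factorial : ℝ) * ((2*v).factorial : ℝ))
              * bernoulliFun (2*v) x)) := by
      rw [hc]
      simp only [div_eq_mul_inv, mul_inv]
      ring
    rw [show Polynomial.eval x (Polynomial.map (algebraMap ℚ ℝ) (Polynomial.bernoulli (2*v)))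
        = bernoulliFun (2*v) x from rfl, hexp, hs, div_self hP, one_mul, one_mul]
  have hsum := hasSum_sum hterm
  have hval : ∑ v ∈ Finset.Icc 1 (L/2),
      (L.factorial : ℝ)/(((L - 2*v + 1).factorial : ℝ) * ((2*v).factorial : ℝ))
        * bernoulliFun (2*v) x
      = (x^L + (1-x)^L)/2 - 1/((L:ℝ)+1) := by
    rw [aux_gsum L x]; ring
  rw [hval] at hsum
  have hfin := hsum.mul_left (-(1/2))
  have hv2 : -(1/2) * ((x^L + (1-x)^L)/2 - 1/((L:ℝ)+1))
      = (1/((L:ℝ)+1) - (x^L + (1-x)^L)/2)/2 := by ring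
  rw [hv2] at hfin
  have hfun : (fun n : ℕ => (∑ v ∈ Finset.Icc 1 (L/2),
        (-1:ℝ)^v * (L.factorial:ℝ) / (((L - 2*v + 1).factorial:ℝ) * (2*π*(n:ℝ))^(2*v)))
        * Real.cos (2*π*(n:ℝ)*x))
      = (fun n : ℕ => -(1/2) * ∑ v ∈ Finset.Icc 1 (L/2),
          c v * (1 / (n:ℝ)^(2*v) * Real.cos (2*π*(n:ℝ)*x))) := by
    funext n
    rw [Finset.mul_sum, Finset.sum_mul]
    apply Finset.sum_congr rfl
    intro v hv
    rw [hc]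
    simp only [mul_pow, pow_succ, div_eq_mul_inv, mul_inv]
    ring
  rw [hfun]
  exact hfin

section
variable (Q : ℝ → ℝ) (μ : Measure ℝ) [IsProbabilityMeasure μ]

lemma aux_null
    (hQcont : ContinuousOn Q (Icc 0 1))
    (hQ0 : Q 0 = 0) (hQ1 : Q 1 = 1)
    (hμ : ∀ a b : ℝ, 0 ≤ a → a ≤ b → b ≤ 1 →
      μ (Ioc a b) = ENNReal.ofReal (Q b - Q a))
    (hμsupp : μ (Icc (0:ℝ) 1)ᶜ = 0) :
    ∀ x : ℝ, μ {x} = 0 := by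
  intro x
  by_cases hx : x ∈ Icc (0:ℝ) 1
  swap
  · exact measure_mono_null (by simpa using hx) hμsupp
  obtain ⟨hx0, hx1⟩ := hx
  rcases eq_or_lt_of_le hx0 with rfl | hpos
  · have hIcc : μ (Icc (0:ℝ) 1) = 1 := by
      have h := measure_add_measure_compl (μ := μ) (measurableSet_Icc (a := (0:ℝ)) (b := 1))
      rw [hμsupp, add_zero] at h
      rw [h, measure_univ]
    have hIoc : μ (Ioc (0:ℝ) 1) = 1 := by
      rw [hμ 0 1 le_rfl zero_le_one le_rfl, hQ1, hQ0]
      norm_num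
    have hins : μ (Icc (0:ℝ) 1) = μ {(0:ℝ)} + μ (Ioc (0:ℝ) 1) := by
      rw [← Set.Ioc_insert_left (zero_le_one), Set.insert_eq]
      exact measure_union (Set.disjoint_singleton_left.mpr (by simp)) measurableSet_Ioc
    rw [hIcc, hIoc] at hins
    have h2 : μ {(0:ℝ)} + 1 = 0 + 1 := by rw [zero_add]; exact hins.symm
    exact (ENNReal.add_left_inj (by simp)).mp h2
  · have hmem : x ∈ Icc (0:ℝ) 1 := ⟨hx0, hx1⟩
    have hIoo : Ioo (0:ℝ) x ∈ 𝓝[<] x := Ioo_mem_nhdsLT_of_mem ⟨hpos, le_rfl⟩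
    have hle : 𝓝[<] x ≤ 𝓝[Icc (0:ℝ) 1] x :=
      nhdsWithin_le_of_mem (mem_of_superset hIoo (fun y hy => ⟨hy.1.le, hy.2.le.trans hx1⟩))
    have htQ : Tendsto Q (𝓝[<] x) (𝓝 (Q x)) := (hQcont x hmem).mono_left hle
    have htend : Tendsto (fun a => ENNReal.ofReal (Q x - Q a)) (𝓝[<] x) (𝓝 0) := by
      have h1 : Tendsto (fun a => Q x - Q a) (𝓝[<] x) (𝓝 0) := by
        have := tendsto_const_nhds (x := Q x) (f := 𝓝[<] x) |>.sub htQ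
        simpa using this
      have := (ENNReal.continuous_ofReal.tendsto 0).comp h1
      simpa [Function.comp_def] using this
    have hev : ∀ᶠ a in 𝓝[<] x, μ {x} ≤ ENNReal.ofReal (Q x - Q a) := by
      filter_upwards [hIoo] with a ha
      rw [← hμ a x ha.1.le ha.2.le hx1]
      exact measure_mono (by simp [ha.2])
    exact le_bot_iff.mp (ge_of_tendsto htend hev)

lemma aux_Ioc
    (hnull : ∀ x : ℝ, μ {x} = 0)
    (hμ : ∀ a b : ℝ, 0 ≤ a → a ≤ b → b ≤ 1 →
      μ (Ioc a b) = ENNReal.ofReal (Q b - Q a))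
    (hμsupp : μ (Icc (0:ℝ) 1)ᶜ = 0) :
    ∀ a b : ℝ, a ≤ b →
      μ (Ioc a b) = ENNReal.ofReal (Q (max 0 (min b 1)) - Q (max 0 (min a 1))) := by
  intro a b hab
  set a' := max 0 (min a 1) with ha'
  set b' := max 0 (min b 1) with hb'
  have hinter : ∀ s : Set ℝ, μ s = μ ((s ∩ Icc 0 1) \ {0}) := by
    intro s
    rw [measure_diff_null (hnull 0)]
    have : μ s ≤ μ (s ∩ Icc 0 1) + μ (Icc (0:ℝ) 1)ᶜ := by
      refine (measure_mono ?_).trans (measure_union_le _ _)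
      intro y hy
      by_cases h : y ∈ Icc (0:ℝ) 1
      · exact Or.inl ⟨hy, h⟩
      · exact Or.inr h
    rw [hμsupp, add_zero] at this
    exact le_antisymm this (measure_mono Set.inter_subset_left)
  have hseteq : (Ioc a b ∩ Icc 0 1) \ {0} = (Ioc a' b' ∩ Icc 0 1) \ {0} := by
    ext y
    simp only [Set.mem_diff, Set.mem_inter_iff, Set.mem_Ioc, Set.mem_Icc,
      Set.mem_singleton_iff]
    constructor
    · rintro ⟨⟨⟨hay, hyb⟩, h0y, hy1⟩, hy0⟩
      have hy0' : 0 < y := lt_of_le_of_ne h0y (Ne.symm hy0)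
      refine ⟨⟨⟨max_lt hy0' ((min_le_left a 1).trans_lt hay),
        le_max_of_le_right (le_min hyb hy1)⟩, h0y, hy1⟩, hy0⟩
    · rintro ⟨⟨⟨hay, hyb⟩, h0y, hy1⟩, hy0⟩
      have hy0' : 0 < y := lt_of_le_of_ne h0y (Ne.symm hy0)
      have h1 : min a 1 < y := ((le_max_right 0 (min a 1)).trans_lt hay)
      have hya : a < y := by
        rcases le_total a 1 with h | h
        · rwa [min_eq_left h] at h1
        · rw [min_eq_right h] at h1; linarith
      have hyb' : y ≤ b := by
        rcases le_total 0 (min b 1) with h | h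
        · rw [hb', max_eq_right h] at hyb
          exact hyb.trans (min_le_left b 1)
        · rw [hb', max_eq_left h] at hyb
          exact absurd (le_antisymm hyb h0y) hy0
      exact ⟨⟨⟨hya, hyb'⟩, h0y, hy1⟩, hy0⟩
  have hbounds : 0 ≤ a' ∧ a' ≤ b' ∧ b' ≤ 1 := by
    refine ⟨le_max_left _ _, max_le_max le_rfl (min_le_min hab le_rfl), ?_⟩
    exact max_le zero_le_one (min_le_right b 1)
  rw [hinter (Ioc a b), hseteq, ← hinter (Ioc a' b'),
    hμ a' b' hbounds.1 hbounds.2.1 hbounds.2.2]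

lemma aux_map
    (hnull : ∀ x : ℝ, μ {x} = 0)
    (hQsymm : ∀ x ∈ Icc (0:ℝ) 1, Q x = 1 - Q (1 - x))
    (hμ : ∀ a b : ℝ, 0 ≤ a → a ≤ b → b ≤ 1 →
      μ (Ioc a b) = ENNReal.ofReal (Q b - Q a))
    (hμsupp : μ (Icc (0:ℝ) 1)ᶜ = 0) :
    Measure.map (fun x : ℝ => 1 - x) μ = μ := by
  have hIocf := aux_Ioc Q μ hnull hμ hμsupp
  have hmeas : Measurable (fun x : ℝ => 1 - x) := measurable_const.sub measurable_id
  apply MeasureTheory.Measure.ext_of_Ioc_finite _ _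
    (by rw [Measure.map_apply hmeas MeasurableSet.univ]; simp)
  intro a b hab
  rw [Measure.map_apply hmeas measurableSet_Ioc]
  have hpre : (fun x : ℝ => 1 - x) ⁻¹' (Ioc a b) = Ico (1-b) (1-a) := by
    ext y
    simp only [Set.mem_preimage, Set.mem_Ioc, Set.mem_Ico]
    constructor <;> intro h <;> exact ⟨by linarith [h.1, h.2], by linarith [h.1, h.2]⟩
  rw [hpre]
  have hIco : μ (Ico (1-b) (1-a)) = μ (Ioc (1-b) (1-a)) := by
    apply le_antisymm
    · have hsub : Ico (1-b) (1-a) ⊆ {(1-b)} ∪ Ioc (1-b) (1-a) := by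
        intro y hy
        rcases eq_or_lt_of_le hy.1 with h | h
        · exact Or.inl (by simp [h.symm])
        · exact Or.inr ⟨h, hy.2.le⟩
      calc μ (Ico (1-b) (1-a)) ≤ μ ({(1-b)} ∪ Ioc (1-b) (1-a)) := measure_mono hsub
        _ ≤ μ {(1-b)} + μ (Ioc (1-b) (1-a)) := measure_union_le _ _
        _ = μ (Ioc (1-b) (1-a)) := by rw [hnull (1-b), zero_add]
    · have hsub : Ioc (1-b) (1-a) ⊆ {(1-a)} ∪ Ico (1-b) (1-a) := by
        intro y hy
        rcases eq_or_lt_of_le hy.2 with h | h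
        · exact Or.inl (by simp [h])
        · exact Or.inr ⟨hy.1.le, h⟩
      calc μ (Ioc (1-b) (1-a)) ≤ μ ({(1-a)} ∪ Ico (1-b) (1-a)) := measure_mono hsub
        _ ≤ μ {(1-a)} + μ (Ico (1-b) (1-a)) := measure_union_le _ _
        _ = μ (Ico (1-b) (1-a)) := by rw [hnull (1-a), zero_add]
  rw [hIco, hIocf (1-b) (1-a) (by linarith), hIocf a b hab.le]
  have hrefl : ∀ t : ℝ, max 0 (min (1-t) 1) = 1 - max 0 (min t 1) := by
    intro t
    rcases le_total t 0 with h | h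
    · rw [min_eq_right (by linarith : (1:ℝ) ≤ 1 - t), min_eq_left (by linarith : t ≤ 1),
        max_eq_left h, max_eq_right zero_le_one, sub_zero]
    · rcases le_total t 1 with h2 | h2
      · rw [min_eq_left (by linarith : 1 - t ≤ 1), min_eq_left h2,
          max_eq_right (by linarith : (0:ℝ) ≤ 1 - t), max_eq_right h]
      · rw [min_eq_left (by linarith : 1 - t ≤ 1), min_eq_right h2,
          max_eq_left (by linarith : 1 - t ≤ 0), max_eq_right zero_le_one, sub_self]
  rw [hrefl a, hrefl b]
  have hmem : ∀ t : ℝ, max 0 (min t 1) ∈ Icc (0:ℝ) 1 := fun t =>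
    ⟨le_max_left _ _, max_le zero_le_one (min_le_right t 1)⟩
  have hQa := hQsymm _ (hmem a)
  have hQb := hQsymm _ (hmem b)
  congr 1
  linarith [hQa, hQb]
end

theorem stmt_4
    (Q : ℝ → ℝ) (μ : Measure ℝ) [IsProbabilityMeasure μ]
    (hQcont : ContinuousOn Q (Icc 0 1))
    (hQmono : StrictMonoOn Q (Icc 0 1))
    (hQ0 : Q 0 = 0) (hQ1 : Q 1 = 1)
    (hQsymm : ∀ x ∈ Icc (0:ℝ) 1, Q x = 1 - Q (1 - x))
    (hQfun : ∀ x ∈ Icc (0:ℝ) 1, Q x = 2 * Q (x / (x + 1)))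
    (hμ : ∀ a b : ℝ, 0 ≤ a → a ≤ b → b ≤ 1 →
      μ (Ioc a b) = ENNReal.ofReal (Q b - Q a))
    (hμsupp : μ (Icc (0:ℝ) 1)ᶜ = 0)
    (d : ℕ → ℝ)
    (hd : ∀ n : ℕ, d n = ∫ x in Icc (0:ℝ) 1, Real.cos (2 * π * n * x) ∂μ)
    (m : ℕ → ℝ)
    (hm : ∀ L : ℕ, m L = ∫ x in Icc (0:ℝ) 1, x ^ L ∂μ)
:
    ∀ L : ℕ,
      Summable (fun n : ℕ => d (n + 1) *
        ∑ v ∈ Finset.Icc 1 (L / 2), (-1 : ℝ) ^ v * (L.factorial : ℝ) /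
          (((L - 2 * v + 1).factorial : ℝ) * (2 * π * ((n : ℝ) + 1)) ^ (2 * v))) ∧
      m L = 1 / ((L : ℝ) + 1) - 2 * ∑' n : ℕ, d (n + 1) *
        ∑ v ∈ Finset.Icc 1 (L / 2), (-1 : ℝ) ^ v * (L.factorial : ℝ) /
          (((L - 2 * v + 1).factorial : ℝ) * (2 * π * ((n : ℝ) + 1)) ^ (2 * v)) := by
  intro L
  set S : ℕ → ℝ := fun n => ∑ v ∈ Finset.Icc 1 (L / 2), (-1 : ℝ) ^ v * (L.factorial : ℝ) /
      (((L - 2 * v + 1).factorial : ℝ) * (2 * π * (n : ℝ)) ^ (2 * v)) with hSdef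
  have hnull := aux_null Q μ hQcont hQ0 hQ1 hμ hμsupp
  have hmap := aux_map Q μ hnull hQsymm hμ hμsupp
  have hae : ∀ᵐ x ∂μ, x ∈ Icc (0:ℝ) 1 := by
    rw [ae_iff]
    exact hμsupp
  have hres : μ.restrict (Icc 0 1) = μ := Measure.restrict_eq_self_of_ae_mem hae
  have hint : ∀ f : ℝ → ℝ, Continuous f → Integrable f μ := by
    intro f hf
    rw [← hres]
    exact ContinuousOn.integrableOn_compact isCompact_Icc hf.continuousOn
  have hm' : m L = ∫ x, x ^ L ∂μ := by rw [hm L, hres]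
  have hd' : ∀ n : ℕ, d n = ∫ x, Real.cos (2 * π * n * x) ∂μ := by
    intro n; rw [hd n, hres]
  have hmeas : Measurable (fun x : ℝ => 1 - x) := measurable_const.sub measurable_id
  have hsymm_int : ∫ x, x ^ L ∂μ = ∫ x, (1 - x) ^ L ∂μ := by
    conv_lhs => rw [← hmap]
    exact integral_map hmeas.aemeasurable (continuous_pow L).aestronglyMeasurable
  have hg : ∫ x, ((x ^ L + (1 - x) ^ L) / 2) ∂μ = m L := by
    have h1 : Integrable (fun x : ℝ => x ^ L) μ := hint _ (continuous_pow L)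
    have h2 : Integrable (fun x : ℝ => (1 - x) ^ L) μ :=
      hint _ ((continuous_const.sub continuous_id).pow L)
    rw [integral_div, integral_add h1 h2, ← hsymm_int, ← hm']
    ring
  set F : ℕ → ℝ → ℝ := fun n x => S n * Real.cos (2 * π * n * x) with hFdef
  have hFint : ∀ n, Integrable (F n) μ := by
    intro n
    exact hint _ (continuous_const.mul (Real.continuous_cos.comp
      (continuous_const.mul continuous_id)))
  have hnorm : ∀ n, ∫ x, ‖F n x‖ ∂μ ≤ |S n| := by
    intro n
    have hb : ∀ x : ℝ, ‖F n x‖ ≤ |S n| := by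
      intro x
      rw [hFdef]
      simp only [norm_mul, Real.norm_eq_abs]
      exact mul_le_of_le_one_right (abs_nonneg _) (Real.abs_cos_le_one _)
    calc ∫ x, ‖F n x‖ ∂μ ≤ ∫ _x, |S n| ∂μ :=
          integral_mono (hFint n).norm (integrable_const _) hb
      _ = |S n| := by simp
  have hSummableNorm : Summable (fun n => ∫ x, ‖F n x‖ ∂μ) :=
    Summable.of_nonneg_of_le (fun n => integral_nonneg (fun x => norm_nonneg _))
      hnorm (aux_summable L).abs
  have hHS := MeasureTheory.hasSum_integral_of_summable_integral_norm hFint hSummableNorm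
  have htsum : ∫ x, (∑' n, F n x) ∂μ
      = ∫ x, ((1 / ((L:ℝ) + 1) - (x ^ L + (1 - x) ^ L) / 2) / 2) ∂μ := by
    apply integral_congr_ae
    filter_upwards [hae] with x hx
    exact (aux_key_s4 L hx).tsum_eq
  have hval : ∫ x, ((1 / ((L:ℝ) + 1) - (x ^ L + (1 - x) ^ L) / 2) / 2) ∂μ
      = (1 / ((L:ℝ) + 1) - m L) / 2 := by
    have h2 : Integrable (fun x : ℝ => (x ^ L + (1 - x) ^ L) / 2) μ :=
      hint _ (((continuous_pow L).add ((continuous_const.sub continuous_id).pow L)).div_const 2)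
    rw [integral_div, integral_sub (integrable_const _) h2, integral_const, hg]
    simp [measure_univ]
  have hFn : ∀ n, ∫ x, F n x ∂μ = S n * d n := by
    intro n
    rw [hd' n, hFdef]
    exact integral_const_mul (S n) _
  rw [htsum, hval] at hHS
  have hHS2 : HasSum (fun n => S n * d n) ((1 / ((L:ℝ) + 1) - m L) / 2) := by
    have := hHS
    simp only [hFn] at this
    exact this
  have hS0 : S 0 = 0 := by
    rw [hSdef]
    apply Finset.sum_eq_zero
    intro v hv
    have hv1 : 1 ≤ v := (Finset.mem_Icc.mp hv).1
    rw [Nat.cast_zero, mul_zero, zero_pow (by omega : 2 * v ≠ 0), mul_zero, div_zero]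
  have hshift : HasSum (fun n => S (n + 1) * d (n + 1)) ((1 / ((L:ℝ) + 1) - m L) / 2) := by
    apply (hasSum_nat_add_iff (f := fun n => S n * d n) 1).mpr
    simpa [Finset.sum_range_one, hS0] using hHS2
  have hfeq : (fun n : ℕ => d (n + 1) *
        ∑ v ∈ Finset.Icc 1 (L / 2), (-1 : ℝ) ^ v * (L.factorial : ℝ) /
          (((L - 2 * v + 1).factorial : ℝ) * (2 * π * ((n : ℝ) + 1)) ^ (2 * v)))
      = fun n => S (n + 1) * d (n + 1) := by
    funext n
    rw [hSdef]
    push_cast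
    ring
  constructor
  · rw [hfeq]
    exact hshift.summable
  · rw [hfeq, hshift.tsum_eq]
    ring
end

section
/- For every integer v ≥ 1, the special value 𝔐(2v) := Σ_{n=1}^{∞} d_n · n^{−2v} (an absolutely convergent series) satisfies 𝔐(2v) / (2π)^{2v} = ((−1)^{v+1}/2) · Σ_{L=0}^{2v} B_{2v−L} · m_L / ((2v−L)! · L!), where B_k denotes the k-th Bernoulli number, defined by the expansion t/(e^t − 1) = Σ_{k=0}^{∞} B_k t^k / k!. -/
open MeasureTheory Real Set Filter Asymptotics

theorem stmt_5
    (Q : ℝ → ℝ) (μ : Measure ℝ) [IsProbabilityMeasure μ]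
    (hQcont : ContinuousOn Q (Icc 0 1))
    (hQmono : StrictMonoOn Q (Icc 0 1))
    (hQ0 : Q 0 = 0) (hQ1 : Q 1 = 1)
    (hQsymm : ∀ x ∈ Icc (0:ℝ) 1, Q x = 1 - Q (1 - x))
    (hQfun : ∀ x ∈ Icc (0:ℝ) 1, Q x = 2 * Q (x / (x + 1)))
    (hμ : ∀ a b : ℝ, 0 ≤ a → a ≤ b → b ≤ 1 →
      μ (Ioc a b) = ENNReal.ofReal (Q b - Q a))
    (hμsupp : μ (Icc (0:ℝ) 1)ᶜ = 0)
    (d : ℕ → ℝ)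
    (hd : ∀ n : ℕ, d n = ∫ x in Icc (0:ℝ) 1, Real.cos (2 * π * n * x) ∂μ)
    (m : ℕ → ℝ)
    (hm : ∀ L : ℕ, m L = ∫ x in Icc (0:ℝ) 1, x ^ L ∂μ)
:
    ∀ v : ℕ, 1 ≤ v →
      Summable (fun n : ℕ => d (n + 1) / ((n : ℝ) + 1) ^ (2 * v)) ∧
      (∑' n : ℕ, d (n + 1) / ((n : ℝ) + 1) ^ (2 * v)) / (2 * π) ^ (2 * v)
        = ((-1 : ℝ) ^ (v + 1) / 2) *
          ∑ L ∈ Finset.range (2 * v + 1),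
            (bernoulli (2 * v - L) : ℝ) * m L / (((2 * v - L).factorial : ℝ) * (L.factorial : ℝ)) := by
  intro v hv
  set ν := μ.restrict (Icc (0:ℝ) 1) with hνdef
  -- the restricted measure is a probability measure
  have hone : μ (Icc (0:ℝ) 1) = 1 := by
    have h := measure_compl (measurableSet_Icc (a := (0:ℝ)) (b := 1)) (measure_ne_top μ _)
    rw [hμsupp, measure_univ] at h
    exact le_antisymm prob_le_one (tsub_eq_zero_iff_le.mp h.symm)
  have hνuniv : ν univ = 1 := by
    rw [hνdef, Measure.restrict_apply_univ, hone]
  have hνprob : IsProbabilityMeasure ν := ⟨hνuniv⟩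
  -- the summands
  set F : ℕ → ℝ → ℝ := fun n x => Real.cos (2 * π * (n + 1) * x) / ((n : ℝ) + 1) ^ (2 * v)
    with hFdef
  have hcpos : ∀ n : ℕ, (0:ℝ) < ((n : ℝ) + 1) ^ (2 * v) := fun n => by positivity
  have hFbound : ∀ n : ℕ, ∀ x : ℝ, ‖F n x‖ ≤ 1 / ((n : ℝ) + 1) ^ (2 * v) := by
    intro n x
    rw [hFdef]
    simp only [Real.norm_eq_abs, abs_div, abs_of_pos (hcpos n)]
    gcongr
    exact Real.abs_cos_le_one _
  have hFint : ∀ n : ℕ, Integrable (F n) ν := by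
    intro n
    refine Integrable.mono' (integrable_const (1 / ((n : ℝ) + 1) ^ (2 * v)))
      (Continuous.aestronglyMeasurable (by fun_prop)) ?_
    filter_upwards with x using hFbound n x
  have hb_sum : Summable (fun n : ℕ => 1 / ((n : ℝ) + 1) ^ (2 * v)) := by
    have h1 : Summable (fun n : ℕ => 1 / (n : ℝ) ^ (2 * v)) :=
      Real.summable_one_div_nat_pow.mpr (by omega)
    have h2 := (summable_nat_add_iff 1).mpr h1
    convert h2 using 2 with n
    case e'_3 => rfl
    push_cast
    ring
  have hsum_norm : Summable (fun n : ℕ => ∫ x, ‖F n x‖ ∂ν) := by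
    refine Summable.of_nonneg_of_le (fun n => integral_nonneg fun x => norm_nonneg _)
      (fun n => ?_) hb_sum
    calc ∫ x, ‖F n x‖ ∂ν ≤ ∫ _x, 1 / ((n : ℝ) + 1) ^ (2 * v) ∂ν :=
          integral_mono (hFint n).norm (integrable_const _) (fun x => hFbound n x)
      _ = 1 / ((n : ℝ) + 1) ^ (2 * v) := by
          rw [integral_const, measureReal_def, hνuniv]; simp
  have hHS : HasSum (fun n => ∫ x, F n x ∂ν) (∫ x, (∑' n, F n x) ∂ν) :=
    hasSum_integral_of_summable_integral_norm hFint hsum_norm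
  -- identify the terms with d (n+1) / (n+1)^(2v)
  have hterm : ∀ n : ℕ, ∫ x, F n x ∂ν = d (n + 1) / ((n : ℝ) + 1) ^ (2 * v) := by
    intro n
    rw [hd (n + 1), hFdef]
    simp only
    rw [integral_div]
    push_cast
    rfl
  -- pointwise sum via the Bernoulli polynomial Fourier expansion
  set C : ℝ := (-1 : ℝ) ^ (v + 1) * (2 * π) ^ (2 * v) / 2 / (2 * v).factorial with hCdef
  have hptwise : ∀ x ∈ Icc (0:ℝ) 1, (∑' n, F n x) =
      C * (Polynomial.map (algebraMap ℚ ℝ) (Polynomial.bernoulli (2 * v))).eval x := by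
    intro x hx
    have h := hasSum_one_div_nat_pow_mul_cos (k := v) (by omega) hx
    have h0 : (fun n : ℕ => 1 / (n : ℝ) ^ (2 * v) * Real.cos (2 * π * n * x)) 0 = 0 := by
      simp [zero_pow (by omega : 2 * v ≠ 0)]
    have h1 : HasSum (fun n : ℕ =>
        1 / ((n : ℝ) + 1) ^ (2 * v) * Real.cos (2 * π * (n + 1) * x))
        (C * (Polynomial.map (algebraMap ℚ ℝ) (Polynomial.bernoulli (2 * v))).eval x) := by
      have := (hasSum_nat_add_iff (f := fun n : ℕ =>
        1 / (n : ℝ) ^ (2 * v) * Real.cos (2 * π * n * x))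
        (g := C * (Polynomial.map (algebraMap ℚ ℝ) (Polynomial.bernoulli (2 * v))).eval x)
        1).mpr ?_
      · convert this using 2 with n
        case e'_3 => rfl
        push_cast
        ring_nf
      · rw [Finset.sum_range_one]
        simpa [zero_pow (by omega : 2 * v ≠ 0)] using h
    have h2 : (fun n : ℕ => 1 / ((n : ℝ) + 1) ^ (2 * v) * Real.cos (2 * π * (n + 1) * x))
        = fun n => F n x := by
      funext n
      rw [hFdef]
      simp only
      ring
    rw [← h2] at *
    exact h1.tsum_eq
  -- integrability of powers
  have hxLint : ∀ L : ℕ, Integrable (fun x : ℝ => x ^ L) ν := by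
    intro L
    refine Integrable.mono' (integrable_const 1)
      (Continuous.aestronglyMeasurable (by fun_prop)) ?_
    filter_upwards [ae_restrict_mem measurableSet_Icc] with x hx
    rw [Real.norm_eq_abs, abs_pow]
    exact pow_le_one₀ (abs_nonneg x) (abs_le.mpr ⟨by linarith [hx.1], hx.2⟩)
  -- evaluate the Bernoulli polynomial
  have hP : ∀ x : ℝ, (Polynomial.map (algebraMap ℚ ℝ) (Polynomial.bernoulli (2 * v))).eval x
      = ∑ i ∈ Finset.range (2 * v + 1),
          ((bernoulli i : ℝ) * (Nat.choose (2 * v) i : ℝ)) * x ^ (2 * v - i) := by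
    intro x
    rw [Polynomial.bernoulli, Polynomial.map_sum, Polynomial.eval_finset_sum]
    refine Finset.sum_congr rfl fun i hi => ?_
    rw [Polynomial.map_monomial, Polynomial.eval_monomial, map_mul, eq_ratCast, map_natCast]
  have hSint : ∫ x, (∑' n, F n x) ∂ν
      = C * ∑ i ∈ Finset.range (2 * v + 1),
          ((bernoulli i : ℝ) * (Nat.choose (2 * v) i : ℝ)) * m (2 * v - i) := by
    rw [integral_congr_ae (g := fun x => C *
        (Polynomial.map (algebraMap ℚ ℝ) (Polynomial.bernoulli (2 * v))).eval x)
      (by filter_upwards [ae_restrict_mem measurableSet_Icc] with x hx using hptwise x hx)]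
    rw [integral_const_mul]
    congr 1
    have : ∀ x : ℝ, (Polynomial.map (algebraMap ℚ ℝ) (Polynomial.bernoulli (2 * v))).eval x
        = ∑ i ∈ Finset.range (2 * v + 1),
            ((bernoulli i : ℝ) * (Nat.choose (2 * v) i : ℝ)) * x ^ (2 * v - i) := hP
    simp_rw [this]
    rw [integral_finset_sum _ (fun i _ => ((hxLint (2 * v - i)).const_mul _))]
    refine Finset.sum_congr rfl fun i hi => ?_
    rw [integral_const_mul, hm]
  have hsummable : Summable (fun n : ℕ => d (n + 1) / ((n : ℝ) + 1) ^ (2 * v)) := by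
    have := hHS.summable
    simpa only [hterm] using this
  refine ⟨hsummable, ?_⟩
  have htsum : (∑' n : ℕ, d (n + 1) / ((n : ℝ) + 1) ^ (2 * v))
      = C * ∑ i ∈ Finset.range (2 * v + 1),
          ((bernoulli i : ℝ) * (Nat.choose (2 * v) i : ℝ)) * m (2 * v - i) := by
    rw [← hSint, ← hHS.tsum_eq]
    exact tsum_congr fun n => (hterm n).symm
  rw [htsum]
  -- reindex RHS
  rw [← Finset.sum_range_reflect (f := fun L =>
      (bernoulli (2 * v - L) : ℝ) * m L / (((2 * v - L).factorial : ℝ) * (L.factorial : ℝ)))]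
  rw [hCdef, Finset.mul_sum, Finset.mul_sum, div_eq_iff (by positivity : ((2:ℝ) * π) ^ (2 * v) ≠ 0),
    Finset.sum_mul]
  refine Finset.sum_congr rfl fun i hi => ?_
  rw [Finset.mem_range] at hi
  have hi' : i ≤ 2 * v := by omega
  have hrefl : 2 * v + 1 - 1 - i = 2 * v - i := by omega
  rw [hrefl, Nat.sub_sub_self hi']
  have hfact : ((Nat.choose (2 * v) i : ℝ)) * (Nat.factorial i : ℝ)
      * (Nat.factorial (2 * v - i) : ℝ) = (Nat.factorial (2 * v) : ℝ) := by
    exact_mod_cast congrArg (Nat.cast : ℕ → ℝ)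
      (Nat.choose_mul_factorial_mul_factorial hi')
  have hne1 : (Nat.factorial i : ℝ) ≠ 0 := Nat.cast_ne_zero.mpr (Nat.factorial_ne_zero i)
  have hne2 : (Nat.factorial (2 * v - i) : ℝ) ≠ 0 := Nat.cast_ne_zero.mpr (Nat.factorial_ne_zero _)
  have hne3 : (Nat.factorial (2 * v) : ℝ) ≠ 0 := Nat.cast_ne_zero.mpr (Nat.factorial_ne_zero _)
  have hne4 : ((Nat.choose (2 * v) i : ℝ)) ≠ 0 := Nat.cast_ne_zero.mpr (Nat.choose_pos hi').ne'
  rw [← hfact]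
  field_simp
end

section
/- Suppose that: F(x) = O(x) as x → 0⁺; 1 − F(x) = O(1/x) as x → ∞; for every odd integer r ≥ 1 the function x ↦ (log x)^r is ν-integrable and ∫₀^∞ (log x)^r dν(x) = 0. Then F(x) + F(1/x) = 1 for every x > 0. -/
open MeasureTheory Real Set Filter Asymptotics

lemma my_int_exp_abs {δ : ℝ} (hδ : 0 < δ) : Integrable (fun s : ℝ => Real.exp (-δ * |s|)) := by
  have g1 : IntegrableOn (fun u : ℝ => Real.exp (-|u|)) (Ioi 0) :=
    (exp_neg_integrableOn_Ioi 0 one_pos).congr_fun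
      (fun s hs => by rw [abs_of_pos hs]; ring_nf) measurableSet_Ioi
  have g2 : IntegrableOn (fun u : ℝ => Real.exp (-|u|)) (Iic 0) :=
    (integrableOn_exp_Iic 0).congr_fun
      (fun s hs => by rw [abs_of_nonpos hs]; ring_nf) measurableSet_Iic
  have g : Integrable (fun u : ℝ => Real.exp (-|u|)) := by
    rw [← integrableOn_univ, ← Iic_union_Ioi (a := (0:ℝ))]
    exact g2.union g1
  have := (g.comp_mul_left' (R := δ) hδ.ne')
  apply this.congr
  filter_upwards with s
  rw [abs_mul, abs_of_pos hδ]; ring_nf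

lemma my_pow_le_exp {x : ℝ} (hx : 0 ≤ x) (n : ℕ) : x ^ n ≤ (n.factorial : ℝ) * Real.exp x := by
  have h2 : x ^ n / (n.factorial : ℝ) ≤ ∑ i ∈ Finset.range (n+1), x ^ i / i.factorial :=
    Finset.single_le_sum (f := fun i => x ^ i / (i.factorial : ℝ))
      (fun i _ => by positivity) (by simp)
  have h := h2.trans (Real.sum_le_exp_of_nonneg hx (n + 1))
  have hn : (0:ℝ) < n.factorial := by positivity
  rw [div_le_iff₀ hn] at h
  linarith [h]

lemma my_int_pow_exp_abs {δ : ℝ} (hδ : 0 < δ) (n : ℕ) :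
    Integrable (fun s : ℝ => |s| ^ n * Real.exp (-δ * |s|)) := by
  have hmeas : AEStronglyMeasurable (fun s : ℝ => |s| ^ n * Real.exp (-δ * |s|)) volume := by
    exact (((continuous_abs.pow n).mul (((continuous_const.mul continuous_abs)).rexp)).aestronglyMeasurable)
  have h2 : 0 < δ / 2 := by linarith
  refine ((my_int_exp_abs h2).const_mul ((n.factorial : ℝ) * (2/δ)^n)).mono' hmeas ?_
  filter_upwards with s
  rw [Real.norm_of_nonneg (by positivity)]
  have key : |s| ^ n ≤ (n.factorial : ℝ) * (2/δ)^n * Real.exp (δ/2 * |s|) := by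
    have := my_pow_le_exp (x := δ/2 * |s|) (by positivity) n
    rw [mul_pow] at this
    have h3 : (δ/2)^n * |s|^n ≤ (n.factorial : ℝ) * Real.exp (δ/2 * |s|) := le_of_eq_of_le (by ring) this
    have h4 : (0:ℝ) < (δ/2)^n := by positivity
    rw [← le_div_iff₀' h4] at h3
    calc |s|^n ≤ (n.factorial : ℝ) * Real.exp (δ/2*|s|) / (δ/2)^n := h3
      _ = (n.factorial : ℝ) * (2/δ)^n * Real.exp (δ/2*|s|) := by
          rw [show (2:ℝ)/δ = (δ/2)⁻¹ from (inv_div δ 2).symm, inv_pow]; ring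
  calc |s| ^ n * Real.exp (-δ * |s|)
      ≤ ((n.factorial : ℝ) * (2/δ)^n * Real.exp (δ/2 * |s|)) * Real.exp (-δ * |s|) := by
        apply mul_le_mul_of_nonneg_right key (Real.exp_nonneg _)
    _ = (n.factorial : ℝ) * (2/δ)^n * Real.exp (-(δ/2) * |s|) := by
        rw [mul_assoc, ← Real.exp_add]; ring_nf

lemma my_key (D : ℝ → ℝ) (hD : Continuous D) (C : ℝ)
    (hbd : ∀ s, |D s| ≤ C * Real.exp (-|s|))
    (hm : ∀ n : ℕ, (∫ s : ℝ, s ^ n * D s) = 0) : ∀ s, D s = 0 := by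
  set Dc : ℝ → ℂ := fun s => (D s : ℂ) with hDc
  have hDccont : Continuous Dc := Complex.continuous_ofReal.comp hD
  -- norm bound for the basic integrand
  have hC : 0 ≤ C := by
    have h := (abs_nonneg (D 0)).trans (hbd 0)
    simpa using h
  have hnorm : ∀ (z : ℂ) (s : ℝ), ‖Dc s * Complex.exp (z * s)‖
      ≤ C * Real.exp (-(1 - |z.re|) * |s|) := by
    intro z s
    rw [norm_mul, Complex.norm_real, Real.norm_eq_abs, Complex.norm_exp]
    have hre : (z * (s:ℂ)).re = z.re * s := by simp [Complex.mul_re]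
    rw [hre]
    have h1 : z.re * s ≤ |z.re| * |s| := le_trans (le_abs_self _) (by rw [abs_mul])
    calc |D s| * Real.exp (z.re * s) ≤ (C * Real.exp (-|s|)) * Real.exp (|z.re| * |s|) := by
          exact mul_le_mul (hbd s) (Real.exp_le_exp.2 h1) (Real.exp_nonneg _) (by positivity)
      _ = C * Real.exp (-(1 - |z.re|) * |s|) := by rw [mul_assoc, ← Real.exp_add]; ring_nf
  have hcont2 : ∀ z : ℂ, Continuous (fun s : ℝ => Dc s * Complex.exp (z * s)) := by
    intro z
    exact hDccont.mul (Complex.continuous_exp.comp (continuous_const.mul Complex.continuous_ofReal))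
  have hΦint : ∀ z : ℂ, |z.re| < 1 → Integrable (fun s : ℝ => Dc s * Complex.exp (z * s)) := by
    intro z hz
    refine ((my_int_exp_abs (δ := 1 - |z.re|) (by linarith)).const_mul C).mono'
      (hcont2 z).aestronglyMeasurable ?_
    filter_upwards with s
    simpa using hnorm z s
  set Φ : ℂ → ℂ := fun z => ∫ s : ℝ, Dc s * Complex.exp (z * s) with hΦ
  -- Φ vanishes on the unit ball
  have hball : ∀ z : ℂ, ‖z‖ < 1 → Φ z = 0 := by
    intro z hz
    set a : ℝ := (‖z‖ + 1) / 2 with ha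
    have haz : ‖z‖ < a := by simp only [ha]; linarith
    have ha1 : a < 1 := by simp only [ha]; linarith
    have ha0 : 0 < a := by have := norm_nonneg z; simp only [ha]; linarith
    set f : ℕ → ℝ → ℂ := fun n s => Dc s * ((z * s) ^ n / n.factorial) with hf
    have hfbd : ∀ (n : ℕ) (s : ℝ),
        ‖f n s‖ ≤ (C * Real.exp (-(1 - a) * |s|)) * (‖z‖ / a) ^ n := by
      intro n s
      have h1 : ‖f n s‖ = |D s| * (‖z * (s:ℂ)‖ ^ n / n.factorial) := by
        simp only [hf]
        rw [norm_mul, norm_div, norm_pow, Complex.norm_real, Real.norm_eq_abs,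
          Complex.norm_natCast]
      have h2 : ‖z * (s:ℂ)‖ ^ n = ‖z‖ ^ n * |s| ^ n := by
        rw [norm_mul, Complex.norm_real, Real.norm_eq_abs, mul_pow]
      have h3 : (a * |s|) ^ n ≤ (n.factorial : ℝ) * Real.exp (a * |s|) :=
        my_pow_le_exp (by positivity) n
      have hfac : (0:ℝ) < n.factorial := by positivity
      have h4 : ‖z‖ ^ n * |s| ^ n / n.factorial ≤ (‖z‖ / a) ^ n * Real.exp (a * |s|) := by
        have he : ‖z‖ ^ n = (‖z‖ / a) ^ n * a ^ n := by
          rw [div_pow]; field_simp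
        calc ‖z‖ ^ n * |s| ^ n / n.factorial
            = (‖z‖ / a) ^ n * ((a * |s|) ^ n / n.factorial) := by rw [he, mul_pow]; ring
          _ ≤ (‖z‖ / a) ^ n * Real.exp (a * |s|) := by
              apply mul_le_mul_of_nonneg_left _ (by positivity)
              rw [div_le_iff₀ hfac]
              linarith [h3]
      rw [h1, h2]
      calc |D s| * (‖z‖ ^ n * |s| ^ n / n.factorial)
          ≤ (C * Real.exp (-|s|)) * ((‖z‖ / a) ^ n * Real.exp (a * |s|)) :=
            mul_le_mul (hbd s) h4 (by positivity) (by positivity)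
        _ = (C * Real.exp (-(1 - a) * |s|)) * (‖z‖ / a) ^ n := by
            rw [show -(1 - a) * |s| = -|s| + a * |s| by ring, Real.exp_add]
            ring
    have hfint : ∀ n : ℕ, Integrable (f n) := by
      intro n
      refine (((my_int_exp_abs (δ := 1 - a) (by linarith)).const_mul C).const_mul
        ((‖z‖ / a) ^ n)).mono' ?_ ?_
      · exact (hDccont.mul (((continuous_const.mul Complex.continuous_ofReal).pow n).div_const
          _)).aestronglyMeasurable
      · filter_upwards with s
        calc ‖f n s‖ ≤ (C * Real.exp (-(1 - a) * |s|)) * (‖z‖ / a) ^ n := hfbd n s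
          _ = (‖z‖ / a) ^ n * (C * Real.exp (-(1 - a) * |s|)) := by ring
    have hK0 : Summable (fun n : ℕ => (∫ s : ℝ, C * Real.exp (-(1 - a) * |s|)) * (‖z‖ / a) ^ n) := by
      apply Summable.mul_left
      apply summable_geometric_of_lt_one (by positivity)
      rw [div_lt_one ha0]; exact haz
    have hsum : Summable (fun n : ℕ => ∫ s : ℝ, ‖f n s‖) := by
      refine Summable.of_nonneg_of_le (fun n => integral_nonneg (fun s => norm_nonneg _))
        (fun n => ?_) hK0
      rw [← integral_mul_const]
      refine integral_mono (hfint n).norm ?_ (fun s => hfbd n s)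
      exact (((my_int_exp_abs (δ := 1 - a) (by linarith)).const_mul C).mul_const _)
    have hHS := hasSum_integral_of_summable_integral_norm hfint hsum
    have hptsum : ∀ s : ℝ, (∑' n : ℕ, f n s) = Dc s * Complex.exp (z * s) := by
      intro s
      have h := NormedSpace.expSeries_div_hasSum_exp (𝔸 := ℂ) (z * s)
      rw [← Complex.exp_eq_exp_ℂ] at h
      exact (h.mul_left (Dc s)).tsum_eq
    have hterm : ∀ n : ℕ, (∫ s : ℝ, f n s) = 0 := by
      intro n
      have heq : (fun s : ℝ => f n s)
          = fun s : ℝ => (z ^ n / n.factorial) * ((s ^ n * D s : ℝ) : ℂ) := by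
        funext s; simp only [hf]; push_cast; ring
      rw [heq, integral_const_mul]
      have hor : (∫ a : ℝ, ((a ^ n * D a : ℝ) : ℂ)) = ((∫ a : ℝ, a ^ n * D a : ℝ) : ℂ) :=
        integral_ofReal
      rw [hor, hm n, Complex.ofReal_zero, mul_zero]
    have hintc : (∫ s : ℝ, ∑' n : ℕ, f n s) = ∫ s : ℝ, Dc s * Complex.exp (z * s) :=
      integral_congr_ae (Filter.Eventually.of_forall hptsum)
    have hzero : HasSum (fun n : ℕ => (0:ℂ)) (∫ s : ℝ, ∑' n : ℕ, f n s) := by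
      rw [show (fun n => ∫ s, f n s) = fun _ => (0:ℂ) from funext hterm] at hHS
      exact hHS
    have hfin := hzero.unique hasSum_zero
    show (∫ s : ℝ, Dc s * Complex.exp (z * s)) = 0
    rw [← hintc, hfin]
  -- differentiability on the strip
  have hdiff : ∀ z₀ : ℂ, |z₀.re| < 1 → DifferentiableAt ℂ Φ z₀ := by
    intro z₀ hz₀
    set ε : ℝ := (1 - |z₀.re|) / 2 with hε
    have hε0 : 0 < ε := by simp only [hε]; linarith
    have key := hasDerivAt_integral_of_dominated_loc_of_deriv_le (𝕜 := ℂ)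
      (F := fun (z : ℂ) (s : ℝ) => Dc s * Complex.exp (z * s))
      (F' := fun (z : ℂ) (s : ℝ) => Dc s * ((s : ℂ) * Complex.exp (z * s)))
      (bound := fun s : ℝ => C * (|s| ^ 1 * Real.exp (-ε * |s|)))
      (μ := volume) (x₀ := z₀) (Metric.ball_mem_nhds z₀ hε0) ?_ ?_ ?_ ?_ ?_ ?_
    · exact key.2.differentiableAt
    · filter_upwards with z
      exact (hcont2 z).aestronglyMeasurable
    · exact hΦint z₀ hz₀
    · exact (hDccont.mul (Complex.continuous_ofReal.mul
        (Complex.continuous_exp.comp (continuous_const.mul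
          Complex.continuous_ofReal)))).aestronglyMeasurable
    · filter_upwards with s
      intro z hzball
      have hzre : |z.re| ≤ |z₀.re| + ε := by
        have h1 : |z.re - z₀.re| ≤ ‖z - z₀‖ := by
          rw [← Complex.sub_re]; exact Complex.abs_re_le_norm _
        have h2 : ‖z - z₀‖ < ε := by
          rwa [Metric.mem_ball, dist_eq_norm] at hzball
        have := abs_sub_abs_le_abs_sub z.re z₀.re
        linarith
      have hb : ‖Dc s * ((s : ℂ) * Complex.exp (z * s))‖
          = |s| * ‖Dc s * Complex.exp (z * s)‖ := by
        simp only [norm_mul, Complex.norm_real, Real.norm_eq_abs]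
        ring
      rw [hb]
      calc |s| * ‖Dc s * Complex.exp (z * s)‖
          ≤ |s| * (C * Real.exp (-(1 - |z.re|) * |s|)) :=
            mul_le_mul_of_nonneg_left (hnorm z s) (abs_nonneg s)
        _ ≤ |s| * (C * Real.exp (-ε * |s|)) := by
            apply mul_le_mul_of_nonneg_left _ (abs_nonneg s)
            apply mul_le_mul_of_nonneg_left _ hC
            apply Real.exp_le_exp.2
            have : ε ≤ 1 - |z.re| := by simp only [hε] at hzre ⊢; linarith
            nlinarith [abs_nonneg s]
        _ = C * (|s| ^ 1 * Real.exp (-ε * |s|)) := by ring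
    · exact (my_int_pow_exp_abs hε0 1).const_mul C
    · filter_upwards with s
      intro z hzball
      have h1 : HasDerivAt (fun z : ℂ => z * (s : ℂ)) (s : ℂ) z := by
        simpa using (hasDerivAt_id z).mul_const (s : ℂ)
      have h2 := h1.cexp
      have h3 := h2.const_mul (Dc s)
      rw [show Dc s * ((s : ℂ) * Complex.exp (z * s)) = Dc s * (Complex.exp (z * s) * s) by ring]
      exact h3
  -- the strip
  set S : Set ℂ := {z : ℂ | |z.re| < 1} with hS
  have hSopen : IsOpen S := by
    have : Continuous (fun z : ℂ => |z.re|) := continuous_abs.comp Complex.continuous_re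
    exact isOpen_lt this continuous_const
  have hSconv : Convex ℝ S := by
    have : S = {z : ℂ | z.re < 1} ∩ {z : ℂ | -1 < z.re} := by
      ext w; simp [hS, abs_lt, and_comm]
    rw [this]
    exact (convex_halfSpace_re_lt 1).inter (convex_halfSpace_re_gt (-1))
  have hdo : DifferentiableOn ℂ Φ S := fun z hz => (hdiff z hz).differentiableWithinAt
  have hanal : AnalyticOnNhd ℂ Φ S := hdo.analyticOnNhd hSopen
  have hzS : (0 : ℂ) ∈ S := by simp [hS]
  have hev : Φ =ᶠ[nhds (0 : ℂ)] 0 := by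
    filter_upwards [Metric.ball_mem_nhds (0 : ℂ) one_pos] with w hw
    exact hball w (by simpa [Metric.mem_ball, dist_zero_right] using hw)
  have hzeroS : Set.EqOn Φ 0 S :=
    hanal.eqOn_zero_of_preconnected_of_eventuallyEq_zero hSconv.isPreconnected hzS hev
  -- Fourier transform vanishes
  have hft : ∀ ξ : ℝ, FourierTransform.fourier Dc ξ = 0 := by
    intro ξ
    have hw : ((-2 * Real.pi * ξ : ℝ) * Complex.I) ∈ S := by
      simp [hS]
    have hΦw := hzeroS hw
    rw [Real.fourier_real_eq_integral_exp_smul]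
    have : ∀ v : ℝ, Complex.exp (↑(-2 * Real.pi * v * ξ) * Complex.I) • Dc v
        = Dc v * Complex.exp ((((-2 * Real.pi * ξ : ℝ) : ℂ) * Complex.I) * v) := by
      intro v
      rw [smul_eq_mul, mul_comm]
      congr 1
      push_cast
      ring
    rw [integral_congr_ae (Filter.Eventually.of_forall this)]
    exact hΦw
  -- Fourier inversion
  have hDcint : Integrable Dc := by
    have := hΦint 0 (by simp)
    simpa using this
  have hftz : FourierTransform.fourier Dc = fun _ => 0 := funext hft
  have hftint : Integrable (FourierTransform.fourier Dc) := by
    rw [hftz]; exact integrable_zero _ _ _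
  have hinv := hDccont.fourierInv_fourier_eq hDcint hftint
  intro s
  have h1 : FourierTransformInv.fourierInv (FourierTransform.fourier Dc) s = Dc s := congrFun hinv s
  rw [hftz] at h1
  have h2 : FourierTransformInv.fourierInv (fun _ : ℝ => (0:ℂ)) s = 0 := by
    rw [Real.fourierInv_eq]
    simp
  rw [h2] at h1
  have h3 : ((D s : ℝ) : ℂ) = 0 := h1.symm
  exact_mod_cast h3

theorem stmt_11
    (F : ℝ → ℝ) (ν : Measure ℝ)
    (hFcont : ContinuousOn F (Ici 0))
    (hFmono : MonotoneOn F (Ici 0))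
    (hF0 : F 0 = 0)
    (hFlim : Tendsto F atTop (nhds 1))
    (hν : ∀ a b : ℝ, 0 ≤ a → a ≤ b → ν (Ioc a b) = ENNReal.ofReal (F b - F a))
    (hνsupp : ν (Ioi (0:ℝ))ᶜ = 0)
    (hO0 : (fun x : ℝ => F x) =O[nhdsWithin 0 (Ioi 0)] (fun x : ℝ => x))
    (hOtop : (fun x : ℝ => 1 - F x) =O[atTop] (fun x : ℝ => x⁻¹))
    (hmom : ∀ r : ℕ, Odd r →
      IntegrableOn (fun x : ℝ => (Real.log x) ^ r) (Ioi 0) ν ∧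
      (∫ x in Ioi (0:ℝ), (Real.log x) ^ r ∂ν) = 0)
:
    ∀ x : ℝ, 0 < x → F x + F x⁻¹ = 1 := by
  have hFnn : ∀ x : ℝ, 0 ≤ x → 0 ≤ F x := by
    intro x hx
    rw [← hF0]
    exact hFmono (mem_Ici.2 le_rfl) (mem_Ici.2 hx) hx
  have hF1 : ∀ x : ℝ, 0 ≤ x → F x ≤ 1 := by
    intro x hx
    refine ge_of_tendsto hFlim ?_
    filter_upwards [eventually_ge_atTop x, eventually_ge_atTop (0:ℝ)] with y hy hy0
    exact hFmono (mem_Ici.2 hx) (mem_Ici.2 hy0) hy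
  have hcontAt : ∀ x : ℝ, 0 < x → ContinuousAt F x := by
    intro x hx
    exact hFcont.continuousAt (Ici_mem_nhds hx)
  have hIoc : ∀ b : ℝ, 0 ≤ b → ν (Ioc 0 b) = ENNReal.ofReal (F b) := by
    intro b hb
    rw [hν 0 b le_rfl hb, hF0, sub_zero]
  have hν1 : ν (Ioi (0:ℝ)) = 1 := by
    have hU : Ioi (0:ℝ) = ⋃ n : ℕ, Ioc 0 (n : ℝ) := by
      ext x
      simp only [mem_Ioi, mem_iUnion, mem_Ioc]
      constructor
      · intro hx
        obtain ⟨n, hn⟩ := exists_nat_ge x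
        exact ⟨n, hx, hn⟩
      · rintro ⟨n, hn, -⟩; exact hn
    have hmono : Monotone (fun n : ℕ => Ioc (0:ℝ) (n:ℝ)) := by
      intro m n hmn
      exact Ioc_subset_Ioc le_rfl (by exact_mod_cast hmn)
    have h1 := tendsto_measure_iUnion_atTop (μ := ν) hmono
    have h2 : Tendsto (fun n : ℕ => ν (Ioc 0 (n:ℝ))) atTop (nhds (ENNReal.ofReal 1)) := by
      have h3 : Tendsto (fun n : ℕ => F (n:ℝ)) atTop (nhds 1) :=
        hFlim.comp tendsto_natCast_atTop_atTop
      have h4 := (ENNReal.continuous_ofReal.tendsto 1).comp h3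
      apply h4.congr
      intro n
      exact (hIoc (n:ℝ) (Nat.cast_nonneg n)).symm
    rw [hU]
    have := tendsto_nhds_unique h1 h2
    rw [this, ENNReal.ofReal_one]
  have hprob : IsProbabilityMeasure ν := by
    constructor
    apply le_antisymm
    · calc ν univ = ν (Ioi 0 ∪ (Ioi 0)ᶜ) := by rw [union_compl_self]
        _ ≤ ν (Ioi 0) + ν (Ioi 0)ᶜ := measure_union_le _ _
        _ = 1 := by rw [hν1, hνsupp, add_zero]
    · rw [← hν1]; exact measure_mono (subset_univ _)
  have hIoi : ∀ b : ℝ, 0 ≤ b → ν (Ioi b) = ENNReal.ofReal (1 - F b) := by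
    intro b hb
    have hsplit : ν (Ioc 0 b) + ν (Ioi b) = 1 := by
      rw [← measure_union (Ioc_disjoint_Ioi le_rfl) measurableSet_Ioi,
        Ioc_union_Ioi_eq_Ioi hb, hν1]
    rw [hIoc b hb] at hsplit
    have hne : ENNReal.ofReal (F b) ≠ ⊤ := ENNReal.ofReal_ne_top
    have : ν (Ioi b) = 1 - ENNReal.ofReal (F b) := by
      rw [← hsplit, ENNReal.add_sub_cancel_left hne]
    rw [this, ← ENNReal.ofReal_one, ← ENNReal.ofReal_sub _ (hFnn b hb)]
  have hatom : ∀ b : ℝ, 0 < b → ν {b} = 0 := by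
    intro b hb
    have hle : ∀ᶠ a in nhdsWithin b (Iio b), ν {b} ≤ ENNReal.ofReal (F b - F a) := by
      have hmem : Ioo 0 b ∈ nhdsWithin b (Iio b) :=
        mem_nhdsWithin.2 ⟨Ioi 0, isOpen_Ioi, hb, by rintro x ⟨h1, h2⟩; exact ⟨h1, h2⟩⟩
      filter_upwards [hmem] with a ha
      rw [← hν a b ha.1.le ha.2.le]
      exact measure_mono (by intro x hx; simp at hx; subst hx; exact ⟨ha.2, le_rfl⟩)
    have htend : Tendsto (fun a : ℝ => ENNReal.ofReal (F b - F a)) (nhdsWithin b (Iio b))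
        (nhds 0) := by
      have h1 : Tendsto F (nhdsWithin b (Iio b)) (nhds (F b)) :=
        ((hcontAt b hb).tendsto).mono_left nhdsWithin_le_nhds
      have h2 : Tendsto (fun a : ℝ => F b - F a) (nhdsWithin b (Iio b)) (nhds 0) := by
        have := (tendsto_const_nhds (x := F b) (f := nhdsWithin b (Iio b))).sub h1
        simpa using this
      have := (ENNReal.continuous_ofReal.tendsto 0).comp h2
      rw [ENNReal.ofReal_zero] at this
      exact this
    exact le_antisymm (ge_of_tendsto htend hle) zero_le
  have hIoo : ∀ b : ℝ, 0 < b → ν (Ioo 0 b) = ENNReal.ofReal (F b) := by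
    intro b hb
    have h1 : ν (Ioc 0 b) = ν (Ioo 0 b) := by
      apply le_antisymm
      · calc ν (Ioc 0 b) ≤ ν (Ioo 0 b ∪ {b}) := by
              apply measure_mono
              intro x hx
              rcases lt_or_eq_of_le hx.2 with h | h
              · exact Or.inl ⟨hx.1, h⟩
              · exact Or.inr (by simp [h])
          _ ≤ ν (Ioo 0 b) + ν {b} := measure_union_le _ _
          _ = ν (Ioo 0 b) := by rw [hatom b hb, add_zero]
      · exact measure_mono Ioo_subset_Ioc_self
    rw [← h1, hIoc b hb.le]
  -- the symmetrized survival function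
  set D : ℝ → ℝ := fun s => 1 - F (Real.exp s) - F (Real.exp (-s)) with hD
  have hDcont : Continuous D := by
    have h1 : Continuous fun s : ℝ => F (Real.exp s) :=
      continuous_iff_continuousAt.2 fun s =>
        (hcontAt _ (Real.exp_pos s)).comp Real.continuous_exp.continuousAt
    have h2 : Continuous fun s : ℝ => F (Real.exp (-s)) := h1.comp continuous_neg
    exact (continuous_const.sub h1).sub h2
  have hDeven : ∀ s : ℝ, D (-s) = D s := by
    intro s
    simp only [hD, neg_neg]
    ring
  -- exponential bound on D
  obtain ⟨c₁, hc₁⟩ := hOtop.bound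
  obtain ⟨c₂, hc₂⟩ := hO0.bound
  rw [eventually_atTop] at hc₁
  obtain ⟨x₀, hx₀⟩ := hc₁
  rw [eventually_nhdsWithin_iff] at hc₂
  obtain ⟨δ, hδ0, hδ⟩ := Metric.eventually_nhds_iff.1 hc₂
  set x₁ : ℝ := max x₀ 1 with hx₁
  set δ₁ : ℝ := min δ 1 with hδ₁
  have hδ₁0 : 0 < δ₁ := lt_min hδ0 one_pos
  have hδ₁le : δ₁ ≤ δ := min_le_left _ _
  set M : ℝ := max (Real.log x₁ + 1) (Real.log δ₁⁻¹ + 1) with hM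
  set C : ℝ := |c₁| + |c₂| + Real.exp M with hC
  have hexpM : 0 < Real.exp M := Real.exp_pos M
  have hCpos : 0 < C := by positivity
  have hbound_half : ∀ s : ℝ, 0 ≤ s → |D s| ≤ C * Real.exp (-s) := by
    intro s hs
    by_cases hsM : M ≤ s
    · -- tail bound
      have hes : x₁ ≤ Real.exp s := by
        have h1 : Real.log x₁ + 1 ≤ s := le_trans (le_max_left _ _) hsM
        have h2 : Real.log x₁ ≤ s := by linarith
        calc x₁ = Real.exp (Real.log x₁) := (Real.exp_log (lt_of_lt_of_le one_pos
            (le_max_right x₀ 1))).symm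
          _ ≤ Real.exp s := Real.exp_le_exp.2 h2
      have htail : ‖1 - F (Real.exp s)‖ ≤ c₁ * ‖(Real.exp s)⁻¹‖ :=
        hx₀ (Real.exp s) (le_trans (le_max_left _ _) hes)
      have htail' : |1 - F (Real.exp s)| ≤ |c₁| * Real.exp (-s) := by
        rw [Real.norm_eq_abs, Real.norm_eq_abs, abs_inv, abs_of_pos (Real.exp_pos s),
          ← Real.exp_neg] at htail
        calc |1 - F (Real.exp s)| ≤ c₁ * Real.exp (-s) := htail
          _ ≤ |c₁| * Real.exp (-s) :=
            mul_le_mul_of_nonneg_right (le_abs_self c₁) (Real.exp_nonneg _)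
      have hsmall : Real.exp (-s) < δ₁ := by
        have h1 : Real.log δ₁⁻¹ + 1 ≤ s := le_trans (le_max_right _ _) hsM
        have h2 : Real.log δ₁⁻¹ < s := by linarith
        have h3 : δ₁⁻¹ < Real.exp s := by
          calc δ₁⁻¹ = Real.exp (Real.log δ₁⁻¹) := (Real.exp_log (by positivity)).symm
            _ < Real.exp s := Real.exp_lt_exp.2 h2
        rw [Real.exp_neg]
        exact (inv_lt_comm₀ hδ₁0 (Real.exp_pos s)).1 h3
      have hsm : ‖F (Real.exp (-s))‖ ≤ c₂ * ‖Real.exp (-s)‖ := by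
        apply hδ
        · rw [Real.dist_eq]
          have : |Real.exp (-s) - 0| = Real.exp (-s) := by
            rw [sub_zero, abs_of_pos (Real.exp_pos _)]
          rw [this]
          exact lt_of_lt_of_le hsmall hδ₁le
        · exact Real.exp_pos _
      have hsm' : |F (Real.exp (-s))| ≤ |c₂| * Real.exp (-s) := by
        rw [Real.norm_eq_abs, Real.norm_eq_abs, abs_of_pos (Real.exp_pos _)] at hsm
        calc |F (Real.exp (-s))| ≤ c₂ * Real.exp (-s) := hsm
          _ ≤ |c₂| * Real.exp (-s) :=
            mul_le_mul_of_nonneg_right (le_abs_self c₂) (Real.exp_nonneg _)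
      have h7 : |D s| ≤ |1 - F (Real.exp s)| + |F (Real.exp (-s))| := by
        simp only [hD]
        have h8 := abs_add_le (1 - F (Real.exp s)) (-(F (Real.exp (-s))))
        simp only [abs_neg] at h8
        calc |1 - F (Real.exp s) - F (Real.exp (-s))|
            = |(1 - F (Real.exp s)) + -(F (Real.exp (-s)))| := by ring_nf
          _ ≤ _ := h8
      calc |D s| ≤ |1 - F (Real.exp s)| + |F (Real.exp (-s))| := h7
        _ ≤ |c₁| * Real.exp (-s) + |c₂| * Real.exp (-s) := add_le_add htail' hsm'
        _ = (|c₁| + |c₂|) * Real.exp (-s) := by ring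
        _ ≤ C * Real.exp (-s) :=
            mul_le_mul_of_nonneg_right (by simp only [hC]; linarith) (Real.exp_nonneg _)
    · -- bounded region
      push_neg at hsM
      have h1 : 0 ≤ F (Real.exp s) := hFnn _ (Real.exp_pos _).le
      have h2 : F (Real.exp s) ≤ 1 := hF1 _ (Real.exp_pos _).le
      have h3 : 0 ≤ F (Real.exp (-s)) := hFnn _ (Real.exp_pos _).le
      have h4 : F (Real.exp (-s)) ≤ 1 := hF1 _ (Real.exp_pos _).le
      have h5 : |D s| ≤ 1 := by
        rw [hD, abs_le]
        constructor <;> simp only <;> linarith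
      have h6 : 1 ≤ Real.exp M * Real.exp (-s) := by
        rw [← Real.exp_add]
        apply Real.one_le_exp
        linarith
      calc |D s| ≤ 1 := h5
        _ ≤ Real.exp M * Real.exp (-s) := h6
        _ ≤ C * Real.exp (-s) := by
            apply mul_le_mul_of_nonneg_right _ (Real.exp_nonneg _)
            simp only [hC]
            linarith [abs_nonneg c₁, abs_nonneg c₂]
  have hbound : ∀ s : ℝ, |D s| ≤ C * Real.exp (-|s|) := by
    intro s
    rcases le_or_gt 0 s with h | h
    · rw [abs_of_nonneg h]; exact hbound_half s h
    · rw [abs_of_neg h, ← hDeven s]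
      have := hbound_half (-s) (by linarith)
      simpa using this
  -- moments of D on the half line vanish
  have hmomD : ∀ k : ℕ, (∫ s in Ioi (0:ℝ), s ^ (2*k) * D s) = 0 := by
    intro k
    obtain ⟨hInt, hZero⟩ := hmom (2*k+1) ⟨k, by ring⟩
    set c : ℝ → ℝ := fun t => (2*k+1 : ℝ) * t ^ (2*k) with hc
    have hccont : Continuous c := continuous_const.mul (continuous_pow _)
    have hcnn : ∀ t, 0 ≤ c t := fun t => by simp only [hc]; exact mul_nonneg (by positivity) ((even_two_mul k).pow_nonneg t)
    have hr0 : (2*k+1 : ℝ) ≠ 0 := by positivity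
    -- helper : integral of the indicator polynomial
    have helper : ∀ u : ℝ, (∫ s in Ioi (0:ℝ), (Iio u).indicator c s) = (max u 0) ^ (2*k+1) := by
      intro u
      rw [integral_indicator measurableSet_Iio, Measure.restrict_restrict measurableSet_Iio]
      rcases le_or_gt u 0 with hu | hu
      · have hempty : Iio u ∩ Ioi 0 = (∅ : Set ℝ) := by
          ext t
          simp only [mem_inter_iff, mem_Iio, mem_Ioi, mem_empty_iff_false, iff_false, not_and]
          intro h1 h2
          linarith
        rw [hempty, max_eq_right hu]
        simp
      · have h1 : Iio u ∩ Ioi 0 = Ioo 0 u := by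
          ext t
          simp only [mem_inter_iff, mem_Iio, mem_Ioi, mem_Ioo]
          tauto
        rw [h1, max_eq_left hu.le, ← MeasureTheory.integral_Ioc_eq_integral_Ioo,
          ← intervalIntegral.integral_of_le hu.le]
        simp only [hc]
        rw [intervalIntegral.integral_const_mul, integral_pow]
        rw [zero_pow (Nat.succ_ne_zero _), sub_zero]
        push_cast
        field_simp
    have hxint : ∀ u : ℝ, Integrable ((Iio u).indicator c) (volume.restrict (Ioi 0)) := by
      intro u
      rw [integrable_indicator_iff measurableSet_Iio]
      rw [IntegrableOn, Measure.restrict_restrict measurableSet_Iio]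
      apply (hccont.integrableOn_Icc (a := 0) (b := u)).mono_set
      intro t ht
      exact ⟨ht.2.le, ht.1.le⟩
    set f : ℝ → ℝ → ℝ :=
      fun x s => (Iio (Real.log x)).indicator c s - (Iio (-Real.log x)).indicator c s with hf
    have hsection : ∀ x : ℝ, Integrable (f x) (volume.restrict (Ioi 0)) :=
      fun x => (hxint _).sub (hxint _)
    have hfid : ∀ x : ℝ, (∫ s in Ioi (0:ℝ), f x s) = (Real.log x) ^ (2*k+1) := by
      intro x
      have : (∫ s in Ioi (0:ℝ), f x s)
          = (∫ s in Ioi (0:ℝ), (Iio (Real.log x)).indicator c s)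
            - ∫ s in Ioi (0:ℝ), (Iio (-Real.log x)).indicator c s :=
        integral_sub (hxint _) (hxint _)
      rw [this, helper, helper]
      set t := Real.log x
      rcases le_or_gt 0 t with ht | ht
      · rw [max_eq_left ht, max_eq_right (by linarith), zero_pow (Nat.succ_ne_zero _), sub_zero]
      · rw [max_eq_right ht.le, max_eq_left (by linarith), zero_pow (Nat.succ_ne_zero _)]
        rw [Odd.neg_pow ⟨k, by ring⟩]
        ring
    -- measurability on the product
    have hmeas_prod : AEStronglyMeasurable (Function.uncurry f)
        ((ν.restrict (Ioi 0)).prod (volume.restrict (Ioi 0))) := by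
      have h1 : Function.uncurry f = fun p : ℝ × ℝ =>
          ({q : ℝ × ℝ | q.2 < Real.log q.1}).indicator (fun q => c q.2) p
          - ({q : ℝ × ℝ | q.2 < -Real.log q.1}).indicator (fun q => c q.2) p := by
        funext p
        simp only [Function.uncurry, hf, Set.indicator_apply, mem_Iio, mem_setOf_eq]
      rw [h1]
      have hm1 : Measurable fun q : ℝ × ℝ => c q.2 := hccont.measurable.comp measurable_snd
      have hs1 : MeasurableSet {q : ℝ × ℝ | q.2 < Real.log q.1} :=
        measurableSet_lt measurable_snd (Real.measurable_log.comp measurable_fst)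
      have hs2 : MeasurableSet {q : ℝ × ℝ | q.2 < -Real.log q.1} :=
        measurableSet_lt measurable_snd ((Real.measurable_log.comp measurable_fst).neg)
      exact ((hm1.indicator hs1).sub (hm1.indicator hs2)).aestronglyMeasurable
    -- the norm integral
    have habs : ∀ x : ℝ, ∀ s ∈ Ioi (0:ℝ), ‖f x s‖ = (Iio |Real.log x|).indicator c s := by
      intro x s hs
      rw [mem_Ioi] at hs
      rw [Real.norm_eq_abs]
      simp only [hf, Set.indicator_apply, mem_Iio]
      rcases le_or_gt 0 (Real.log x) with ht | ht
      · have h2 : ¬ (s < -Real.log x) := by push_neg; linarith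
        rw [if_neg h2, sub_zero, abs_of_nonneg ht]
        split_ifs with h3
        · exact abs_of_nonneg (hcnn s)
        · exact abs_zero
      · have h2 : ¬ (s < Real.log x) := by push_neg; linarith
        rw [if_neg h2, zero_sub, abs_neg, abs_of_neg ht]
        split_ifs with h3
        · exact abs_of_nonneg (hcnn s)
        · exact abs_zero
    have hnormeq : ∀ x : ℝ, (∫ s in Ioi (0:ℝ), ‖f x s‖) = |Real.log x| ^ (2*k+1) := by
      intro x
      rw [setIntegral_congr_fun measurableSet_Ioi (habs x), helper,
        max_eq_left (abs_nonneg _)]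
    have hgl : Integrable (fun x => |Real.log x| ^ (2*k+1)) (ν.restrict (Ioi 0)) := by
      have h1 := hInt.abs
      simp only [abs_pow] at h1
      exact h1
    have hnorm_int : Integrable (fun x => ∫ s in Ioi (0:ℝ), ‖f x s‖) (ν.restrict (Ioi 0)) :=
      hgl.congr (ae_of_all _ fun x => (hnormeq x).symm)
    have hprodInt : Integrable (Function.uncurry f)
        ((ν.restrict (Ioi 0)).prod (volume.restrict (Ioi 0))) := by
      rw [integrable_prod_iff hmeas_prod]
      exact ⟨ae_of_all _ hsection, hnorm_int⟩
    have hswap := integral_integral_swap hprodInt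
    -- left side is the moment, which vanishes
    have hleft : (∫ x, ∫ s in Ioi (0:ℝ), f x s ∂volume ∂(ν.restrict (Ioi 0))) = 0 := by
      rw [integral_congr_ae (ae_of_all _ hfid)]
      exact hZero
    -- inner integral on the right
    have hinner : ∀ s ∈ Ioi (0:ℝ), (∫ x, f x s ∂(ν.restrict (Ioi 0))) = c s * D s := by
      intro s hs
      rw [mem_Ioi] at hs
      have hx1 : ∀ x ∈ Ioi (0:ℝ), f x s = (Ioi (Real.exp s)).indicator (fun _ => c s) x
          - (Iio (Real.exp (-s))).indicator (fun _ => c s) x := by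
        intro x hx
        rw [mem_Ioi] at hx
        simp only [hf, Set.indicator_apply, mem_Iio, mem_Ioi]
        have e1 : (s < Real.log x) ↔ (Real.exp s < x) := (Real.lt_log_iff_exp_lt hx)
        have e2 : (s < -Real.log x) ↔ (x < Real.exp (-s)) := by
          rw [lt_neg, Real.log_lt_iff_lt_exp hx]
        rw [if_congr e1 rfl rfl, if_congr e2 rfl rfl]
      have hrw : (∫ x, f x s ∂(ν.restrict (Ioi 0)))
          = ∫ x, ((Ioi (Real.exp s)).indicator (fun _ => c s) x
            - (Iio (Real.exp (-s))).indicator (fun _ => c s) x) ∂(ν.restrict (Ioi 0)) := by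
        apply integral_congr_ae
        filter_upwards [ae_restrict_mem measurableSet_Ioi] with x hx
        exact hx1 x hx
      have hi1 : Integrable ((Ioi (Real.exp s)).indicator (fun _ => c s))
          (ν.restrict (Ioi 0)) := by
        rw [integrable_indicator_iff measurableSet_Ioi]
        exact integrableOn_const (measure_ne_top _ _)
      have hi2 : Integrable ((Iio (Real.exp (-s))).indicator (fun _ => c s))
          (ν.restrict (Ioi 0)) := by
        rw [integrable_indicator_iff measurableSet_Iio]
        exact integrableOn_const (measure_ne_top _ _)
      rw [hrw, integral_sub hi1 hi2, integral_indicator_const _ measurableSet_Ioi,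
        integral_indicator_const _ measurableSet_Iio]
      rw [measureReal_def, measureReal_def, Measure.restrict_apply measurableSet_Ioi, Measure.restrict_apply measurableSet_Iio]
      have hs1 : Ioi (Real.exp s) ∩ Ioi 0 = Ioi (Real.exp s) :=
        inter_eq_left.2 (fun y hy => lt_trans (Real.exp_pos s) hy)
      have hs2 : Iio (Real.exp (-s)) ∩ Ioi 0 = Ioo 0 (Real.exp (-s)) := by
        ext y
        simp only [mem_inter_iff, mem_Iio, mem_Ioi, mem_Ioo]
        tauto
      rw [hs1, hs2, hIoi _ (Real.exp_pos s).le, hIoo _ (Real.exp_pos (-s)),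
        ENNReal.toReal_ofReal (by linarith [hF1 (Real.exp s) (Real.exp_pos s).le]),
        ENNReal.toReal_ofReal (hFnn _ (Real.exp_pos (-s)).le)]
      simp only [smul_eq_mul, hD]
      ring
    have hright : (∫ s in Ioi (0:ℝ), ∫ x, f x s ∂(ν.restrict (Ioi 0)))
        = ∫ s in Ioi (0:ℝ), c s * D s := by
      apply setIntegral_congr_fun measurableSet_Ioi
      intro s hs
      exact hinner s hs
    have hfinal : (∫ s in Ioi (0:ℝ), c s * D s) = 0 := by
      rw [← hright, ← hswap, hleft]
    have : (∫ s in Ioi (0:ℝ), c s * D s) = (2*k+1 : ℝ) * ∫ s in Ioi (0:ℝ), s ^ (2*k) * D s := by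
      rw [← integral_const_mul]
      congr 1
      funext s
      simp only [hc]
      ring
    rw [this] at hfinal
    exact (mul_eq_zero.1 hfinal).resolve_left hr0
  -- integrability of the moments of D on the line
  have hintn : ∀ n : ℕ, Integrable (fun s : ℝ => s ^ n * D s) := by
    intro n
    refine ((my_int_pow_exp_abs one_pos n).const_mul C).mono'
      (((continuous_pow n).mul hDcont).aestronglyMeasurable) ?_
    filter_upwards with s
    rw [Real.norm_eq_abs, abs_mul, abs_pow]
    have hnm : (-1:ℝ) * |s| = -|s| := by ring
    calc |s| ^ n * |D s| ≤ |s| ^ n * (C * Real.exp (-|s|)) :=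
          mul_le_mul_of_nonneg_left (hbound s) (by positivity)
      _ = C * (|s| ^ n * Real.exp (-1 * |s|)) := by rw [hnm]; ring
  -- all moments of D on the line vanish
  have hmomall : ∀ n : ℕ, (∫ s : ℝ, s ^ n * D s) = 0 := by
    intro n
    have hsplit : (∫ s in Iic (0:ℝ), s ^ n * D s) + (∫ s in Ioi (0:ℝ), s ^ n * D s)
        = ∫ s : ℝ, s ^ n * D s :=
      intervalIntegral.integral_Iic_add_Ioi (hintn n).integrableOn (hintn n).integrableOn
    have hneg : (∫ s in Iic (0:ℝ), s ^ n * D s)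
        = (-1:ℝ) ^ n * ∫ s in Ioi (0:ℝ), s ^ n * D s := by
      have h1 : (∫ s in Ioi (0:ℝ), (-s) ^ n * D (-s)) = ∫ s in Iic (-(0:ℝ)), s ^ n * D s :=
        integral_comp_neg_Ioi 0 (fun s => s ^ n * D s)
      rw [neg_zero] at h1
      rw [← h1, ← integral_const_mul]
      apply setIntegral_congr_fun measurableSet_Ioi
      intro s _
      show (-s) ^ n * D (-s) = (-1) ^ n * (s ^ n * D s)
      rw [hDeven s, neg_pow]
      ring
    rcases Nat.even_or_odd n with he | ho
    · obtain ⟨m, hm⟩ := he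
      have h2 : (∫ s in Ioi (0:ℝ), s ^ n * D s) = 0 := by
        have h3 := hmomD m
        rw [show 2*m = n by omega] at h3
        exact h3
      rw [← hsplit, hneg, h2]
      ring
    · have h3 : (-1:ℝ) ^ n = -1 := Odd.neg_one_pow ho
      have h4 := hneg
      rw [h3] at h4
      rw [← hsplit, h4]
      ring
  -- conclude via the key lemma
  have hDzero := my_key D hDcont C hbound hmomall
  intro x hx
  have h := hDzero (Real.log x)
  simp only [hD] at h
  rw [Real.exp_log hx, ← Real.log_inv, Real.exp_log (inv_pos.2 hx)] at h
  linarith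
end

section
/- Define the operator 𝒯 on continuous functions on [0,1] by (𝒯f)(x) = (1/2)·f(x/(x+1)) + (1/2)·f(1/(x+1)). Then for every integer n ≥ 1 and every fixed x ∈ [0,1], the iterates satisfy 𝒯^s[y ↦ cos(2πny)](x) → d_n as s → ∞. -/
open MeasureTheory Real Set Filter Asymptotics

lemma aux_mem_a {y : ℝ} (hy : y ∈ Icc (0:ℝ) 1) : y / (y + 1) ∈ Icc (0:ℝ) 1 := by
  obtain ⟨h0, h1⟩ := hy
  constructor
  · positivity
  · rw [div_le_one (by linarith)]; linarith

lemma aux_mem_b {y : ℝ} (hy : y ∈ Icc (0:ℝ) 1) : 1 / (y + 1) ∈ Icc (0:ℝ) 1 := by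
  obtain ⟨h0, h1⟩ := hy
  constructor
  · positivity
  · rw [div_le_one (by linarith)]; linarith

lemma aux_rep (Q : ℝ → ℝ)
    (hQsymm : ∀ x ∈ Icc (0:ℝ) 1, Q x = 1 - Q (1 - x))
    (hQfun : ∀ x ∈ Icc (0:ℝ) 1, Q x = 2 * Q (x / (x + 1)))
    (T : (ℝ → ℝ) → (ℝ → ℝ))
    (hT : ∀ (f : ℝ → ℝ) (x : ℝ), T f x = (1 / 2) * f (x / (x + 1)) + (1 / 2) * f (1 / (x + 1)))
    (x : ℝ) (hx : x ∈ Icc (0:ℝ) 1) (hQx : Q x ∈ Icc (0:ℝ) 1) (s : ℕ) :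
    ∃ ξ : ℕ → ℝ, (∀ k, k < 2 ^ s → ξ k ∈ Icc (0:ℝ) 1 ∧
        Q (ξ k) ∈ Icc ((k : ℝ) / 2 ^ s) (((k : ℝ) + 1) / 2 ^ s)) ∧
      ∀ f : ℝ → ℝ, T^[s] f x = (1 / 2 ^ s) * ∑ k ∈ Finset.range (2 ^ s), f (ξ k) := by
  induction s with
  | zero =>
    refine ⟨fun _ => x, ?_, fun f => by simp⟩
    intro k hk
    interval_cases k
    simpa using ⟨hx, hQx⟩
  | succ s ih =>
    obtain ⟨ξ, hξ, hrep⟩ := ih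
    have h2s : (2:ℝ) ^ s ≠ 0 := by positivity
    have h2 : 2 ^ (s + 1) = 2 ^ s + 2 ^ s := by rw [pow_succ]; ring
    set ξ' : ℕ → ℝ := fun j =>
      if j < 2 ^ s then ξ j / (ξ j + 1) else 1 / (ξ (2 ^ (s+1) - 1 - j) + 1) with hξ'def
    have hQa : ∀ y ∈ Icc (0:ℝ) 1, Q (y / (y + 1)) = Q y / 2 := by
      intro y hy
      have := hQfun y hy; linarith
    have hQb : ∀ y ∈ Icc (0:ℝ) 1, Q (1 / (y + 1)) = 1 - Q y / 2 := by
      intro y hy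
      have hy1 : (0:ℝ) < y + 1 := by have := hy.1; linarith
      have hb := hQsymm (1 / (y + 1)) (aux_mem_b hy)
      have he : 1 - 1 / (y + 1) = y / (y + 1) := by field_simp; ring
      rw [he, hQa y hy] at hb
      linarith [hb]
    refine ⟨ξ', ?_, ?_⟩
    · intro j hj
      by_cases hjs : j < 2 ^ s
      · obtain ⟨hmem, hQlo, hQhi⟩ := hξ j hjs
        have hval : ξ' j = ξ j / (ξ j + 1) := by simp [hξ'def, hjs]
        refine ⟨hval ▸ aux_mem_a hmem, ?_⟩
        rw [hval, hQa _ hmem]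
        have e1 : (j:ℝ) / 2 ^ (s+1) = ((j:ℝ) / 2 ^ s) / 2 := by
          rw [pow_succ]; field_simp
        have e2 : ((j:ℝ) + 1) / 2 ^ (s+1) = (((j:ℝ) + 1) / 2 ^ s) / 2 := by
          rw [pow_succ]; field_simp
        exact ⟨by rw [e1]; linarith, by rw [e2]; linarith⟩
      · push_neg at hjs
        set k := 2 ^ (s+1) - 1 - j with hkdef
        have hk : k < 2 ^ s := by omega
        have hjk : j = 2 ^ (s+1) - 1 - k := by omega
        have hjkR : (j:ℝ) = 2 ^ (s+1) - 1 - k := by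
          have : (j:ℕ) + k + 1 = 2 ^ (s+1) := by omega
          have := congrArg (fun m : ℕ => (m : ℝ)) this
          push_cast at this
          push_cast
          linarith
        obtain ⟨hmem, hQlo, hQhi⟩ := hξ k hk
        have hval : ξ' j = 1 / (ξ k + 1) := by
          simp only [hξ'def]
          rw [if_neg (by omega)]
        refine ⟨hval ▸ aux_mem_b hmem, ?_⟩
        rw [hval, hQb _ hmem]
        have e1 : (j:ℝ) / 2 ^ (s+1) = 1 - (((k:ℝ) + 1) / 2 ^ s) / 2 := by
          rw [hjkR, pow_succ]; push_cast; field_simp; ring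
        have e2 : ((j:ℝ) + 1) / 2 ^ (s+1) = 1 - (((k:ℝ)) / 2 ^ s) / 2 := by
          rw [hjkR, pow_succ]; push_cast; field_simp; ring
        exact ⟨by rw [e1]; linarith, by rw [e2]; linarith⟩
    · intro f
      rw [Function.iterate_succ_apply, hrep (T f)]
      have hTf : ∀ k ∈ Finset.range (2 ^ s),
          T f (ξ k) = (1/2) * f (ξ k / (ξ k + 1)) + (1/2) * f (1 / (ξ k + 1)) :=
        fun k _ => hT f (ξ k)
      rw [Finset.sum_congr rfl hTf]
      have hsum : ∑ j ∈ Finset.range (2 ^ (s+1)), f (ξ' j)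
          = (∑ k ∈ Finset.range (2 ^ s), f (ξ k / (ξ k + 1)))
            + ∑ k ∈ Finset.range (2 ^ s), f (1 / (ξ k + 1)) := by
        rw [h2, Finset.sum_range_add]
        congr 1
        · exact Finset.sum_congr rfl fun j hj => by
            rw [Finset.mem_range] at hj
            simp [hξ'def, hj]
        · have : ∀ j ∈ Finset.range (2 ^ s),
              f (ξ' (2 ^ s + j)) = f (1 / (ξ (2 ^ s - 1 - j) + 1)) := by
            intro j hj
            rw [Finset.mem_range] at hj
            have h1 : ¬ (2 ^ s + j < 2 ^ s) := by omega
            have h3 : 2 ^ (s+1) - 1 - (2 ^ s + j) = 2 ^ s - 1 - j := by omega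
            simp only [hξ'def, if_neg h1, h3]
          rw [Finset.sum_congr rfl this]
          exact Finset.sum_range_reflect (fun k => f (1 / (ξ k + 1))) (2 ^ s)
      rw [hsum, Finset.sum_add_distrib, ← Finset.mul_sum, ← Finset.mul_sum, pow_succ]
      ring


lemma aux_unif (Q f : ℝ → ℝ) (hQcont : ContinuousOn Q (Icc 0 1))
    (hQmono : StrictMonoOn Q (Icc 0 1)) (hQ0 : Q 0 = 0) (hQ1 : Q 1 = 1)
    (hf : Continuous f) {ε : ℝ} (hε : 0 < ε) :
    ∃ δ > 0, ∀ u ∈ Icc (0:ℝ) 1, ∀ v ∈ Icc (0:ℝ) 1,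
      |Q u - Q v| ≤ δ → |f u - f v| ≤ ε := by
  have h01 : (0:ℝ) ≤ 1 := by norm_num
  have hmapsTo : MapsTo Q (Icc (0:ℝ) 1) (Icc (0:ℝ) 1) := by
    intro y hy
    have h1 := hQmono.monotoneOn (left_mem_Icc.mpr h01) hy hy.1
    have h2 := hQmono.monotoneOn hy (right_mem_Icc.mpr h01) hy.2
    exact ⟨hQ0 ▸ h1, hQ1 ▸ h2⟩
  set K := Icc (0:ℝ) 1
  let e : K → K := fun y => ⟨Q y, hmapsTo y.2⟩
  have he : Continuous e := Continuous.subtype_mk hQcont.restrict _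
  have hinj : Function.Injective e := by
    intro a b hab
    exact Subtype.ext (hQmono.injOn a.2 b.2 (congrArg Subtype.val hab))
  have hsurjQ : Function.Surjective e := by
    rintro ⟨t, ht⟩
    have : t ∈ Icc (Q 0) (Q 1) := by rw [hQ0, hQ1]; exact ht
    obtain ⟨y, hy, hQy⟩ := intermediate_value_Icc h01 hQcont this
    exact ⟨⟨y, hy⟩, Subtype.ext hQy⟩
  let E : K ≃ K := Equiv.ofBijective e ⟨hinj, hsurjQ⟩
  have heE : Continuous (E : K → K) := he
  let H : K ≃ₜ K := Continuous.homeoOfEquivCompactToT2 heE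
  let g : K → ℝ := fun t => f ((H.symm t : K) : ℝ)
  have hg : Continuous g := hf.comp (continuous_subtype_val.comp H.symm.continuous)
  have hug : UniformContinuous g := CompactSpace.uniformContinuous_of_continuous hg
  rw [Metric.uniformContinuous_iff] at hug
  obtain ⟨δ, hδ, hδg⟩ := hug ε hε
  refine ⟨δ / 2, by linarith, ?_⟩
  intro u hu v hv huv
  have hdist : dist (H ⟨u, hu⟩) (H ⟨v, hv⟩) < δ := by
    have : dist (H ⟨u, hu⟩) (H ⟨v, hv⟩) = |Q u - Q v| := by
      rw [Subtype.dist_eq]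
      rfl
    rw [this]; linarith
  have := hδg hdist
  have hgu : g (H ⟨u, hu⟩) = f u := by
    simp only [g, Homeomorph.symm_apply_apply]
  have hgv : g (H ⟨v, hv⟩) = f v := by
    simp only [g, Homeomorph.symm_apply_apply]
  rw [hgu, hgv, Real.dist_eq] at this
  linarith [this]


theorem stmt_18
    (Q : ℝ → ℝ) (μ : Measure ℝ) [IsProbabilityMeasure μ]
    (hQcont : ContinuousOn Q (Icc 0 1))
    (hQmono : StrictMonoOn Q (Icc 0 1))
    (hQ0 : Q 0 = 0) (hQ1 : Q 1 = 1)
    (hQsymm : ∀ x ∈ Icc (0:ℝ) 1, Q x = 1 - Q (1 - x))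
    (hQfun : ∀ x ∈ Icc (0:ℝ) 1, Q x = 2 * Q (x / (x + 1)))
    (hμ : ∀ a b : ℝ, 0 ≤ a → a ≤ b → b ≤ 1 →
      μ (Ioc a b) = ENNReal.ofReal (Q b - Q a))
    (hμsupp : μ (Icc (0:ℝ) 1)ᶜ = 0)
    (d : ℕ → ℝ)
    (hd : ∀ n : ℕ, d n = ∫ x in Icc (0:ℝ) 1, Real.cos (2 * π * n * x) ∂μ)
    (T : (ℝ → ℝ) → (ℝ → ℝ))
    (hT : ∀ (f : ℝ → ℝ) (x : ℝ), T f x = (1 / 2) * f (x / (x + 1)) + (1 / 2) * f (1 / (x + 1)))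
:
    ∀ n : ℕ, 1 ≤ n → ∀ x ∈ Icc (0:ℝ) 1,
      Tendsto (fun s : ℕ => (T^[s] (fun y : ℝ => Real.cos (2 * π * n * y))) x)
        atTop (nhds (d n)) := by
  intro n hn x hx
  set f : ℝ → ℝ := fun y : ℝ => Real.cos (2 * π * n * y) with hfdef
  have hfc : Continuous f := by fun_prop
  have h01 : (0:ℝ) ≤ 1 := by norm_num
  have hmapsTo : MapsTo Q (Icc (0:ℝ) 1) (Icc (0:ℝ) 1) := by
    intro y hy
    have h1 := hQmono.monotoneOn (left_mem_Icc.mpr h01) hy hy.1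
    have h2 := hQmono.monotoneOn hy (right_mem_Icc.mpr h01) hy.2
    exact ⟨hQ0 ▸ h1, hQ1 ▸ h2⟩
  have hQx : Q x ∈ Icc (0:ℝ) 1 := hmapsTo hx
  have hfint : Integrable f μ := by
    refine (integrable_const (1:ℝ)).mono' hfc.aestronglyMeasurable (ae_of_all _ fun y => ?_)
    simp only [hfdef, Real.norm_eq_abs]
    exact Real.abs_cos_le_one _
  -- null complement of Ioc 0 1
  have hμIoc : μ (Ioc (0:ℝ) 1) = 1 := by
    rw [hμ 0 1 le_rfl h01 le_rfl, hQ0, hQ1]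
    simp
  have hμc : μ (Ioc (0:ℝ) 1)ᶜ = 0 := by
    have h := measure_add_measure_compl (μ := μ) (measurableSet_Ioc (a := (0:ℝ)) (b := 1))
    rw [hμIoc, measure_univ] at h
    have h1 : (1:ENNReal) + μ (Ioc (0:ℝ) 1)ᶜ = 1 + 0 := by simpa using h
    exact (ENNReal.add_right_inj (by norm_num)).mp h1
  have hIccIoc : (Icc (0:ℝ) 1 : Set ℝ) =ᵐ[μ] (Ioc (0:ℝ) 1 : Set ℝ) := by
    have hz : μ ({(0:ℝ)} : Set ℝ) = 0 := by
      refine measure_mono_null ?_ hμc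
      intro y hy
      simp only [mem_singleton_iff] at hy
      simp [hy]
    have h0 : ∀ᵐ y ∂μ, y ≠ (0:ℝ) := by
      rw [ae_iff]
      simpa using hz
    filter_upwards [h0] with y hy
    simp only [eq_iff_iff, mem_Icc, mem_Ioc]
    constructor
    · rintro ⟨h1, h2⟩; exact ⟨lt_of_le_of_ne h1 (Ne.symm hy), h2⟩
    · rintro ⟨h1, h2⟩; exact ⟨le_of_lt h1, h2⟩
  -- right inverse of Q
  have hsurj' : ∀ t : ℝ, ∃ y : ℝ, t ∈ Icc (0:ℝ) 1 → (y ∈ Icc (0:ℝ) 1 ∧ Q y = t) := by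
    intro t
    by_cases ht : t ∈ Icc (0:ℝ) 1
    · have : t ∈ Icc (Q 0) (Q 1) := by rw [hQ0, hQ1]; exact ht
      obtain ⟨y, hy, hQy⟩ := intermediate_value_Icc h01 hQcont this
      exact ⟨y, fun _ => ⟨hy, hQy⟩⟩
    · exact ⟨0, fun h => absurd h ht⟩
  choose R hR using hsurj'
  rw [Metric.tendsto_atTop]
  intro ε hε
  obtain ⟨δ, hδpos, hδ⟩ := aux_unif Q f hQcont hQmono hQ0 hQ1 hfc (by linarith : (0:ℝ) < ε / 2)
  have htend : Tendsto (fun s : ℕ => (1:ℝ) / 2 ^ s) atTop (nhds 0) := by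
    have h := tendsto_pow_atTop_nhds_zero_of_lt_one
      (by norm_num : (0:ℝ) ≤ 1 / 2) (by norm_num : (1:ℝ)/2 < 1)
    convert h using 2 with s
    rw [div_pow, one_pow]
  have hev : ∀ᶠ s : ℕ in atTop, (1:ℝ) / 2 ^ s < δ := htend.eventually (Iio_mem_nhds hδpos)
  rw [eventually_atTop] at hev
  obtain ⟨s₀, hs₀⟩ := hev
  refine ⟨s₀, fun s hs => ?_⟩
  have hδs : (1:ℝ) / 2 ^ s ≤ δ := le_of_lt (hs₀ s hs)
  -- main estimate for this s
  obtain ⟨ξ, hξ, hrep⟩ := aux_rep Q hQsymm hQfun T hT x hx hQx s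
  set N := 2 ^ s with hN
  have h2s : (0:ℝ) < 2 ^ s := by positivity
  have hNcast : ((N : ℕ) : ℝ) = 2 ^ s := by rw [hN]; push_cast; ring
  set q : ℕ → ℝ := fun k => R ((k : ℝ) / 2 ^ s) with hqdef
  have hkmem : ∀ k : ℕ, k ≤ N → (k : ℝ) / 2 ^ s ∈ Icc (0:ℝ) 1 := by
    intro k hk
    constructor
    · positivity
    · rw [div_le_one h2s]
      calc (k:ℝ) ≤ (N:ℝ) := by exact_mod_cast hk
        _ = 2 ^ s := hNcast
  have hq : ∀ k : ℕ, k ≤ N → q k ∈ Icc (0:ℝ) 1 ∧ Q (q k) = (k : ℝ) / 2 ^ s :=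
    fun k hk => hR _ (hkmem k hk)
  have hqmono : ∀ i j : ℕ, i ≤ j → j ≤ N → q i ≤ q j := by
    intro i j hij hj
    by_contra hcon
    push_neg at hcon
    have h1 := hQmono (hq j hj).1 (hq i (le_trans hij hj)).1 hcon
    rw [(hq j hj).2, (hq i (le_trans hij hj)).2] at h1
    have h2 : (i:ℝ) ≤ (j:ℝ) := by exact_mod_cast hij
    rw [div_lt_div_iff₀ h2s h2s] at h1
    nlinarith
  have hq0 : q 0 = 0 := by
    have h := (hq 0 (Nat.zero_le N)).2
    simp only [Nat.cast_zero, zero_div] at h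
    exact hQmono.injOn (hq 0 (Nat.zero_le N)).1 (left_mem_Icc.mpr h01) (by rw [h, hQ0])
  have hqN : q N = 1 := by
    have h := (hq N le_rfl).2
    rw [hNcast, div_self (ne_of_gt h2s)] at h
    exact hQmono.injOn (hq N le_rfl).1 (right_mem_Icc.mpr h01) (by rw [h, hQ1])
  have hμk : ∀ k : ℕ, k < N → μ (Ioc (q k) (q (k+1))) = ENNReal.ofReal ((1:ℝ) / 2 ^ s) := by
    intro k hk
    have hk1 : k + 1 ≤ N := hk
    have h := hμ (q k) (q (k+1)) (hq k (le_of_lt hk)).1.1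
      (hqmono k (k+1) (Nat.le_succ k) hk1) (hq (k+1) hk1).1.2
    rw [(hq k (le_of_lt hk)).2, (hq (k+1) hk1).2] at h
    rw [h]
    congr 1
    push_cast
    ring
  have hμktoReal : ∀ k : ℕ, k < N → (μ (Ioc (q k) (q (k+1)))).toReal = (1:ℝ) / 2 ^ s := by
    intro k hk
    rw [hμk k hk, ENNReal.toReal_ofReal (by positivity)]
  -- decompose integral
  have hdecomp : ∀ m : ℕ, m ≤ N →
      ∫ u in Ioc (q 0) (q m), f u ∂μ
        = ∑ k ∈ Finset.range m, ∫ u in Ioc (q k) (q (k+1)), f u ∂μ := by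
    intro m
    induction m with
    | zero => intro _; simp
    | succ m ihm =>
      intro hm1
      have hm : m ≤ N := le_of_lt hm1
      rw [← Set.Ioc_union_Ioc_eq_Ioc (hqmono 0 m (Nat.zero_le m) hm)
        (hqmono m (m+1) (Nat.le_succ m) hm1),
        setIntegral_union (Set.Ioc_disjoint_Ioc.mpr (le_trans (min_le_left _ _) (le_max_right _ _)))
          measurableSet_Ioc hfint.integrableOn hfint.integrableOn,
        ihm hm, Finset.sum_range_succ]
  -- per-interval estimate
  have hterm : ∀ k : ℕ, k < N →
      |(1 / 2 ^ s) * f (ξ k) - ∫ u in Ioc (q k) (q (k+1)), f u ∂μ| ≤ (ε / 2) * (1 / 2 ^ s) := by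
    intro k hk
    obtain ⟨hξmem, hξQ⟩ := hξ k hk
    have hconst : (1 / 2 ^ s : ℝ) * f (ξ k) = ∫ _ in Ioc (q k) (q (k+1)), f (ξ k) ∂μ := by
      rw [setIntegral_const, measureReal_def, hμktoReal k hk, smul_eq_mul]
    rw [hconst, ← integral_sub (integrable_const _) hfint.integrableOn]
    have hμlt : μ (Ioc (q k) (q (k+1))) < ⊤ := by
      rw [hμk k hk]; exact ENNReal.ofReal_lt_top
    have hbound : ∀ u ∈ Ioc (q k) (q (k+1)), ‖f (ξ k) - f u‖ ≤ ε / 2 := by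
      intro u hu
      have hk1 : k + 1 ≤ N := hk
      have hqk := hq k (le_of_lt hk)
      have hqk1 := hq (k+1) hk1
      have humem : u ∈ Icc (0:ℝ) 1 := by
        constructor
        · exact le_trans hqk.1.1 (le_of_lt hu.1)
        · exact le_trans hu.2 hqk1.1.2
      have hQu1 : Q (q k) < Q u := hQmono hqk.1 humem hu.1
      have hQu2 : Q u ≤ Q (q (k+1)) := hQmono.monotoneOn humem hqk1.1 hu.2
      rw [hqk.2] at hQu1
      rw [hqk1.2] at hQu2
      have hQξ1 : (k:ℝ) / 2 ^ s ≤ Q (ξ k) := hξQ.1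
      have hQξ2 : Q (ξ k) ≤ ((k:ℝ) + 1) / 2 ^ s := hξQ.2
      have hdiff : ((k:ℝ) + 1) / 2 ^ s - (k:ℝ) / 2 ^ s = 1 / 2 ^ s := by ring
      have hcast : ((k:ℕ) + 1 : ℕ) = ((k:ℝ) + 1 : ℝ) := by push_cast; ring
      have habs : |Q (ξ k) - Q u| ≤ δ := by
        rw [abs_le]
        constructor
        · push_cast at hQu2
          linarith
        · push_cast at hQu2
          linarith
      have := hδ (ξ k) hξmem u humem habs
      rw [Real.norm_eq_abs]
      exact this
    have hmeas : AEStronglyMeasurable (fun u => f (ξ k) - f u)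
        (μ.restrict (Ioc (q k) (q (k+1)))) :=
      (aestronglyMeasurable_const.sub hfc.aestronglyMeasurable).restrict
    have := norm_setIntegral_le_of_norm_le_const hμlt hbound
    rw [measureReal_def, hμktoReal k hk] at this
    rw [← Real.norm_eq_abs]
    exact this
  -- assemble
  have hdN : d n = ∑ k ∈ Finset.range N, ∫ u in Ioc (q k) (q (k+1)), f u ∂μ := by
    rw [hd n]
    have h1 : ∫ u in Icc (0:ℝ) 1, f u ∂μ = ∫ u in Ioc (q 0) (q N), f u ∂μ := by
      rw [hq0, hqN]
      exact setIntegral_congr_set hIccIoc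
    calc ∫ u in Icc (0:ℝ) 1, Real.cos (2 * π * n * u) ∂μ
        = ∫ u in Ioc (q 0) (q N), f u ∂μ := h1
      _ = _ := hdecomp N le_rfl
  have hTs : T^[s] f x = ∑ k ∈ Finset.range N, (1 / 2 ^ s) * f (ξ k) := by
    rw [hrep f, Finset.mul_sum]
  have hfinal : |T^[s] f x - d n| ≤ ε / 2 := by
    rw [hTs, hdN, ← Finset.sum_sub_distrib]
    calc |∑ k ∈ Finset.range N,
          ((1 / 2 ^ s) * f (ξ k) - ∫ u in Ioc (q k) (q (k+1)), f u ∂μ)|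
        ≤ ∑ k ∈ Finset.range N,
          |(1 / 2 ^ s) * f (ξ k) - ∫ u in Ioc (q k) (q (k+1)), f u ∂μ| :=
          Finset.abs_sum_le_sum_abs _ _
      _ ≤ ∑ _k ∈ Finset.range N, (ε / 2) * (1 / 2 ^ s) := by
          refine Finset.sum_le_sum fun k hk => hterm k (Finset.mem_range.mp hk)
      _ = (ε / 2) := by
          rw [Finset.sum_const, Finset.card_range, nsmul_eq_mul, hNcast]
          field_simp
  rw [Real.dist_eq]
  calc |T^[s] f x - d n| ≤ ε / 2 := hfinal
    _ < ε := by linarith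
end
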